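/- arXiv:1507.06520 — 5 statements merged into one kernel-verified Lean document; each statement's English description precedes it below -/
import Mathlib

section
/- The matrix MᵀM satisfies: (i) MᵀM e_v = e_v for every vertex v, and (ii) MᵀM g = (d−1)^{−2} g for every g ∈ ℂ^{2B} that is orthogonal to e_v for all vertices v. Consequently the singular values of M are 1 with multiplicity n and 1/(d−1) with multiplicity n(d−1). -/
open scoped BigOperators Matrix

/-- The classical transition matrix `M` on directed bonds: `M_{bc} = 1/(d-1)` if the head of
`b` equals the tail of `c` and `c` is not the reversal of `b`, and `0` otherwise. -/
noncomputable def transM {V : Type} [DecidableEq V] (G : SimpleGraph V) (d : ℕ) :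
    Matrix G.Dart G.Dart ℂ := fun b c =>
  if b.snd = c.fst ∧ c ≠ b.symm then ((d : ℂ) - 1)⁻¹ else 0

/-- `e_v`: indicator vector of the directed bonds with tail `v`. -/
def eVec {V : Type} [DecidableEq V] (G : SimpleGraph V) (v : V) : G.Dart → ℂ :=
  fun b => if b.fst = v then 1 else 0

set_option linter.unusedSectionVars false

open Finset

variable {V : Type} [Fintype V] [DecidableEq V] {G : SimpleGraph V} [DecidableRel G.Adj] {d : ℕ}

lemma symm_ne_iff (a b : G.Dart) (h : a.snd = b.fst) : b ≠ a.symm ↔ a.fst ≠ b.snd := by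
  rw [Ne, Ne, not_iff_not]
  constructor
  · rintro rfl; simp
  · intro heq
    ext : 1
    exact Prod.ext h.symm heq.symm

lemma count_lemma (hd : 3 ≤ d) (hreg : G.IsRegularOfDegree d) (b c : G.Dart) :
    (((univ.filter (fun a : G.Dart =>
        (a.snd = b.fst ∧ b ≠ a.symm) ∧ (a.snd = c.fst ∧ c ≠ a.symm))).card : ℂ))
    = (if b.fst = c.fst then ((d : ℂ) - 2) else 0) + (if b = c then 1 else 0) := by
  by_cases hv : b.fst = c.fst
  · have hcard : (univ.filter (fun a : G.Dart =>
        (a.snd = b.fst ∧ b ≠ a.symm) ∧ (a.snd = c.fst ∧ c ≠ a.symm))).card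
        = (G.neighborFinset b.fst \ {b.snd, c.snd}).card := by
      refine Finset.card_bij' (fun a _ => a.fst)
        (fun u hu => SimpleGraph.Dart.mk (u, b.fst)
          (G.adj_symm ((G.mem_neighborFinset _ _).1 (Finset.mem_sdiff.1 hu).1))) ?_ ?_ ?_ ?_
      · intro a ha
        simp only [Finset.mem_filter, Finset.mem_univ, true_and] at ha
        obtain ⟨⟨h1, h2⟩, h3, h4⟩ := ha
        rw [symm_ne_iff a b h1] at h2
        rw [symm_ne_iff a c h3] at h4
        simp only [Finset.mem_sdiff, SimpleGraph.mem_neighborFinset, Finset.mem_insert,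
          Finset.mem_singleton]
        refine ⟨?_, ?_⟩
        · have := a.adj
          rw [h1] at this
          exact G.adj_symm this
        · push_neg
          exact ⟨h2, h4⟩
      · intro u hu
        simp only [Finset.mem_sdiff, SimpleGraph.mem_neighborFinset, Finset.mem_insert,
          Finset.mem_singleton, not_or] at hu
        obtain ⟨hadj, hu1, hu2⟩ := hu
        simp only [Finset.mem_filter, Finset.mem_univ, true_and]
        exact ⟨(symm_ne_iff _ b rfl).mpr hu1, hv, (symm_ne_iff _ c hv).mpr hu2⟩
      · intro a ha
        simp only [Finset.mem_filter, Finset.mem_univ, true_and] at ha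
        ext : 1
        exact Prod.ext rfl ha.1.1.symm
      · intro u hu
        rfl
    rw [hcard]
    have hbn : b.snd ∈ G.neighborFinset b.fst := (G.mem_neighborFinset _ _).2 b.adj
    have hcn : c.snd ∈ G.neighborFinset b.fst := by
      rw [SimpleGraph.mem_neighborFinset, hv]; exact c.adj
    have hdeg : (G.neighborFinset b.fst).card = d := hreg b.fst
    by_cases hbc : b = c
    · subst hbc
      have h2 : ({b.snd, b.snd} : Finset V) = {b.snd} := by simp
      rw [h2, Finset.card_sdiff_of_subset (by simpa using hbn), hdeg, Finset.card_singleton]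
      rw [if_pos rfl, if_pos rfl]
      have h1 : 1 ≤ d := by omega
      push_cast [Nat.cast_sub h1]
      ring
    · have hsnd : b.snd ≠ c.snd := by
        intro h
        exact hbc (by ext : 1; exact Prod.ext hv h)
      have hsub : ({b.snd, c.snd} : Finset V) ⊆ G.neighborFinset b.fst := by
        intro x hx
        simp only [Finset.mem_insert, Finset.mem_singleton] at hx
        rcases hx with rfl | rfl
        · exact hbn
        · exact hcn
      rw [Finset.card_sdiff_of_subset hsub, hdeg, Finset.card_insert_of_notMem (by simpa using hsnd),
        Finset.card_singleton]
      rw [if_pos hv, if_neg hbc]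
      have h2 : 2 ≤ d := by omega
      push_cast [Nat.cast_sub h2]
      ring
  · have hbc : b ≠ c := fun h => hv (by rw [h])
    rw [if_neg hv, if_neg hbc]
    have he : (univ.filter (fun a : G.Dart =>
        (a.snd = b.fst ∧ b ≠ a.symm) ∧ (a.snd = c.fst ∧ c ≠ a.symm))) = ∅ := by
      apply Finset.filter_false_of_mem
      rintro a _ ⟨⟨h1, -⟩, h2, -⟩
      exact hv (h1.symm.trans h2)
    rw [he]
    simp

lemma entry_lemma (hd : 3 ≤ d) (hreg : G.IsRegularOfDegree d) (b c : G.Dart) :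
    ((transM G d)ᵀ * transM G d) b c =
      (((d : ℂ) - 1) ^ 2)⁻¹ *
        ((if b.fst = c.fst then ((d : ℂ) - 2) else 0) + (if b = c then 1 else 0)) := by
  rw [Matrix.mul_apply]
  simp only [Matrix.transpose_apply, transM]
  have key : ∀ a : G.Dart,
      (if a.snd = b.fst ∧ b ≠ a.symm then ((d : ℂ) - 1)⁻¹ else 0) *
        (if a.snd = c.fst ∧ c ≠ a.symm then ((d : ℂ) - 1)⁻¹ else 0) =
      if (a.snd = b.fst ∧ b ≠ a.symm) ∧ (a.snd = c.fst ∧ c ≠ a.symm) then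
        (((d : ℂ) - 1) ^ 2)⁻¹ else 0 := by
    intro a
    by_cases h1 : a.snd = b.fst ∧ b ≠ a.symm <;>
      by_cases h2 : a.snd = c.fst ∧ c ≠ a.symm
    · rw [if_pos h1, if_pos h2, if_pos ⟨h1, h2⟩, ← mul_inv, ← sq]
    · rw [if_pos h1, if_neg h2, if_neg (fun h => h2 h.2), mul_zero]
    · rw [if_neg h1, if_pos h2, if_neg (fun h => h1 h.1), zero_mul]
    · rw [if_neg h1, if_neg h2, if_neg (fun h => h1 h.1), zero_mul]
  rw [Finset.sum_congr rfl (fun a _ => key a), ← Finset.sum_filter, Finset.sum_const,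
    nsmul_eq_mul, count_lemma hd hreg b c, mul_comm]

lemma dcast_ne (hd : 3 ≤ d) : ((d : ℂ) - 1) ≠ 0 := by
  intro h
  have h2 : (d : ℂ) = ((1 : ℕ) : ℂ) := by push_cast; linear_combination h
  have := Nat.cast_injective (R := ℂ) h2
  omega

lemma part1 (hd : 3 ≤ d) (hreg : G.IsRegularOfDegree d) (v : V) :
    ((transM G d)ᵀ * transM G d).mulVec (eVec G v) = eVec G v := by
  funext b
  simp only [Matrix.mulVec, dotProduct]
  rw [Finset.sum_congr rfl (fun c _ => by rw [entry_lemma hd hreg b c])]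
  simp only [eVec]
  have key : ∀ c : G.Dart,
      (((d : ℂ) - 1) ^ 2)⁻¹ *
          ((if b.fst = c.fst then ((d : ℂ) - 2) else 0) + (if b = c then 1 else 0)) *
        (if c.fst = v then 1 else 0)
      = (((d : ℂ) - 1) ^ 2)⁻¹ *
          ((if b.fst = v then (if c.fst = v then ((d : ℂ) - 2) else 0) else 0)
            + (if b = c then (if c.fst = v then 1 else 0) else 0)) := by
    intro c
    by_cases h1 : c.fst = v
    · by_cases h2 : b = c
      · subst h2; simp [h1]
      · by_cases h3 : b.fst = c.fst <;> simp [h1, h2, h3] <;> simp [h3 ▸ h1] <;> ring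
    · by_cases h2 : b = c
      · subst h2; simp [h1]
      · by_cases h3 : b.fst = v <;> simp [h1, h2, h3]
  rw [Finset.sum_congr rfl (fun c _ => key c), ← Finset.mul_sum, Finset.sum_add_distrib]
  have s2 : (∑ c : G.Dart, if b = c then (if c.fst = v then (1:ℂ) else 0) else 0)
      = if b.fst = v then 1 else 0 := by
    rw [Finset.sum_ite_eq]
    simp
  have s1 : (∑ c : G.Dart, if b.fst = v then (if c.fst = v then ((d : ℂ) - 2) else 0) else 0)
      = if b.fst = v then ((d : ℂ) * ((d : ℂ) - 2)) else 0 := by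
    by_cases h3 : b.fst = v
    · simp only [if_pos h3]
      rw [← Finset.sum_filter, Finset.sum_const, nsmul_eq_mul]
      have : (Finset.univ.filter (fun c : G.Dart => c.fst = v)).card = d := by
        rw [SimpleGraph.dart_fst_fiber_card_eq_degree]
        exact hreg v
      rw [this]
    · simp [h3]
  rw [s1, s2]
  have hne := dcast_ne (d := d) hd
  by_cases h3 : b.fst = v
  · simp only [if_pos h3]
    field_simp
    ring
  · simp only [if_neg h3]
    ring

lemma part2 (hd : 3 ≤ d) (hreg : G.IsRegularOfDegree d) (g : G.Dart → ℂ)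
    (hg : ∀ v : V, ∑ b : G.Dart, (starRingEnd ℂ) (eVec G v b) * g b = 0) :
    ((transM G d)ᵀ * transM G d).mulVec g = (((d : ℂ) - 1) ^ 2)⁻¹ • g := by
  have hg' : ∀ v : V, (∑ c : G.Dart, if c.fst = v then g c else 0) = 0 := by
    intro v
    have := hg v
    simpa [eVec, apply_ite, ite_mul] using this
  funext b
  simp only [Matrix.mulVec, dotProduct, Pi.smul_apply, smul_eq_mul]
  rw [Finset.sum_congr rfl (fun c _ => by rw [entry_lemma hd hreg b c])]
  have key : ∀ c : G.Dart,
      (((d : ℂ) - 1) ^ 2)⁻¹ *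
          ((if b.fst = c.fst then ((d : ℂ) - 2) else 0) + (if b = c then 1 else 0)) * g c
      = (((d : ℂ) - 1) ^ 2)⁻¹ *
          (((d : ℂ) - 2) * (if c.fst = b.fst then g c else 0)
            + (if b = c then g c else 0)) := by
    intro c
    by_cases h1 : b.fst = c.fst
    · by_cases h2 : b = c
      · subst h2
        simp only [eq_self_iff_true, if_true]
        ring
      · simp only [if_pos h1, if_pos h1.symm, if_neg h2]
        ring
    · have h1' : ¬ (c.fst = b.fst) := fun h => h1 h.symm
      have h2 : b ≠ c := fun h => h1 (by rw [h])
      simp [h1, h1', h2]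
  rw [Finset.sum_congr rfl (fun c _ => key c), ← Finset.mul_sum, Finset.sum_add_distrib,
    ← Finset.mul_sum, hg' b.fst, Finset.sum_ite_eq]
  simp

lemma lindep (hd : 3 ≤ d) (hreg : G.IsRegularOfDegree d) :
    LinearIndependent ℂ (eVec G : V → (G.Dart → ℂ)) := by
  rw [Fintype.linearIndependent_iff]
  intro gc hsum v
  have hdeg : 0 < G.degree v := by rw [hreg v]; omega
  obtain ⟨u, hu⟩ := (G.degree_pos_iff_exists_adj v).mp hdeg
  have := congrFun hsum (SimpleGraph.Dart.mk (v, u) hu)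
  simpa [eVec, Finset.sum_apply, mul_ite, mul_one, mul_zero, Finset.sum_ite_eq] using this

theorem final (hd : 3 ≤ d) (hreg : G.IsRegularOfDegree d) :
    Module.finrank ℂ
        (Module.End.eigenspace ((transM G d)ᵀ * transM G d).mulVecLin (1 : ℂ)) =
      Fintype.card V ∧
    Module.finrank ℂ
        (Module.End.eigenspace ((transM G d)ᵀ * transM G d).mulVecLin
          ((((d : ℂ) - 1) ^ 2)⁻¹)) =
      Fintype.card V * (d - 1) := by
  classical
  set A := ((transM G d)ᵀ * transM G d).mulVecLin with hA
  set lam : ℂ := (((d : ℂ) - 1) ^ 2)⁻¹ with hlam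
  -- lam ≠ 1
  have hsq : ((d : ℂ) - 1) ^ 2 = (((d - 1) ^ 2 : ℕ) : ℂ) := by
    push_cast [Nat.cast_sub (show 1 ≤ d by omega)]
    ring
  have hlam_ne : lam ≠ 1 := by
    intro h
    rw [hlam, inv_eq_one, hsq] at h
    have h2 : ((d - 1) ^ 2 : ℕ) = 1 := by exact_mod_cast h
    have h5 : 2 ≤ d - 1 := by omega
    have h6 := Nat.pow_le_pow_left h5 2
    rw [h2] at h6
    norm_num at h6
  -- eigenspace containments
  have hE1 : Submodule.span ℂ (Set.range (eVec G)) ≤ Module.End.eigenspace A 1 := by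
    rw [Submodule.span_le]
    rintro _ ⟨v, rfl⟩
    rw [SetLike.mem_coe, Module.End.mem_eigenspace_iff, one_smul]
    exact (Matrix.mulVecLin_apply _ _).trans (part1 hd hreg v)
  let N : Matrix V G.Dart ℂ := Matrix.of fun v b => eVec G v b
  have hE2 : LinearMap.ker N.mulVecLin ≤ Module.End.eigenspace A lam := by
    intro g hker
    rw [LinearMap.mem_ker] at hker
    rw [Module.End.mem_eigenspace_iff]
    have hg : ∀ v : V, ∑ b : G.Dart, (starRingEnd ℂ) (eVec G v b) * g b = 0 := by
      intro v
      have := congrFun hker v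
      simpa [N, Matrix.mulVecLin_apply, Matrix.mulVec, dotProduct, eVec,
        apply_ite, ite_mul, one_mul, zero_mul] using this
    exact (Matrix.mulVecLin_apply _ _).trans (part2 hd hreg g hg)
  -- dimensions
  have hdim1 : Module.finrank ℂ (Submodule.span ℂ (Set.range (eVec G))) = Fintype.card V :=
    finrank_span_eq_card (lindep hd hreg)
  have hrk : Module.finrank ℂ (LinearMap.range N.mulVecLin)
      + Module.finrank ℂ (LinearMap.ker N.mulVecLin)
      = Fintype.card G.Dart := by
    rw [LinearMap.finrank_range_add_finrank_ker, Module.finrank_fintype_fun_eq_card]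
  have hrle : Module.finrank ℂ (LinearMap.range N.mulVecLin) ≤ Fintype.card V := by
    have := Submodule.finrank_le (LinearMap.range N.mulVecLin)
    rwa [Module.finrank_fintype_fun_eq_card] at this
  -- disjointness
  have hdisj : Disjoint (Module.End.eigenspace A 1) (Module.End.eigenspace A lam) := by
    rw [Submodule.disjoint_def]
    intro x h1 h2
    rw [Module.End.mem_eigenspace_iff] at h1 h2
    have h3 : (1 - lam) • x = 0 := by
      rw [sub_smul, one_smul, sub_eq_zero]
      rw [one_smul] at h1
      exact h1.symm.trans h2
    rcases smul_eq_zero.1 h3 with h4 | h4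
    · exact absurd (sub_eq_zero.1 h4).symm hlam_ne
    · exact h4
  have hsum : Module.finrank ℂ (Module.End.eigenspace A 1)
      + Module.finrank ℂ (Module.End.eigenspace A lam) ≤ Fintype.card G.Dart := by
    have h1 := Submodule.finrank_sup_add_finrank_inf_eq
      (Module.End.eigenspace A 1) (Module.End.eigenspace A lam)
    rw [hdisj.eq_bot, finrank_bot] at h1
    have h2 := Submodule.finrank_le (Module.End.eigenspace A 1 ⊔ Module.End.eigenspace A lam)
    rw [Module.finrank_fintype_fun_eq_card] at h2
    omega
  have hlow1 : Fintype.card V ≤ Module.finrank ℂ (Module.End.eigenspace A 1) := by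
    rw [← hdim1]
    exact Submodule.finrank_mono hE1
  have hlow2 : Fintype.card G.Dart - Fintype.card V
      ≤ Module.finrank ℂ (Module.End.eigenspace A lam) := by
    have := Submodule.finrank_mono hE2
    omega
  have hcardD : Fintype.card G.Dart = Fintype.card V * d := by
    rw [SimpleGraph.dart_card_eq_sum_degrees,
      Finset.sum_congr rfl (fun v _ => hreg v), Finset.sum_const, smul_eq_mul,
      Finset.card_univ]
  have hmd : Fintype.card V * d = Fintype.card V * (d - 1) + Fintype.card V := by
    have h1 : d - 1 + 1 = d := by omega
    rw [← h1, Nat.mul_succ, h1]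
  constructor
  · omega
  · omega


/-- `MᵀM` fixes each `e_v`, acts as `(d-1)⁻²` on the orthogonal complement of the `e_v`'s,
and consequently the singular values of `M` are `1` with multiplicity `n` and `1/(d-1)` with
multiplicity `n(d-1)` (stated via the dimensions of the eigenspaces of `MᵀM`). -/
theorem transpose_mul_transM {V : Type} [Fintype V] [DecidableEq V]
    (G : SimpleGraph V) [DecidableRel G.Adj]
    (d : ℕ) (hd : 3 ≤ d) (hreg : G.IsRegularOfDegree d) :
    (∀ v : V, ((transM G d)ᵀ * transM G d).mulVec (eVec G v) = eVec G v) ∧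
    (∀ g : G.Dart → ℂ, (∀ v : V, ∑ b : G.Dart, (starRingEnd ℂ) (eVec G v b) * g b = 0) →
      ((transM G d)ᵀ * transM G d).mulVec g = (((d : ℂ) - 1) ^ 2)⁻¹ • g) ∧
    Module.finrank ℂ
        (Module.End.eigenspace ((transM G d)ᵀ * transM G d).mulVecLin (1 : ℂ)) =
      Fintype.card V ∧
    Module.finrank ℂ
        (Module.End.eigenspace ((transM G d)ᵀ * transM G d).mulVecLin
          ((((d : ℂ) - 1) ^ 2)⁻¹)) =
      Fintype.card V * (d - 1) := by
  exact ⟨part1 hd hreg, part2 hd hreg, (final hd hreg).1, (final hd hreg).2⟩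
end

section
/- Let a ∈ ℂ^n and set f = Σ_{v=1}^n a_v e_v ∈ ℂ^{2B}. Then for every integer t ≥ 0, ψ( Ĉ^t (a ⊕ 0) ) = M^t f, where a ⊕ 0 ∈ ℂ^{2n} is the vector with first n components a and last n components zero. -/
open scoped BigOperators Matrix

/-- `ẽ_v`: indicator vector of the directed bonds with head `v`. -/
def eTilde {V : Type} [DecidableEq V] (G : SimpleGraph V) (v : V) : G.Dart → ℂ :=
  fun b => if b.snd = v then 1 else 0

/-- The adjacency (connectivity) matrix of `G`, over `ℂ`. -/
def adjC {V : Type} (G : SimpleGraph V) [DecidableRel G.Adj] : Matrix V V ℂ :=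
  fun v w => if G.Adj v w then 1 else 0

/-- The `2n × 2n` block matrix `Ĉ = [[0, −(d−1)⁻¹ I],[I, (d−1)⁻¹ C]]`. -/
noncomputable def Chat {V : Type} [DecidableEq V] (G : SimpleGraph V) [DecidableRel G.Adj]
    (d : ℕ) : Matrix (V ⊕ V) (V ⊕ V) ℂ :=
  Matrix.fromBlocks 0 (-(((d : ℂ) - 1)⁻¹ • (1 : Matrix V V ℂ))) (1 : Matrix V V ℂ)
    (((d : ℂ) - 1)⁻¹ • adjC G)

/-- The linear map `ψ : ℂ^{2n} → ℂ^{2B}`, `ψ(a ⊕ b) = ∑_v a_v e_v + ∑_v b_v ẽ_v`. -/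
noncomputable def psiMap {V : Type} [Fintype V] [DecidableEq V] (G : SimpleGraph V)
    (x : V ⊕ V → ℂ) : G.Dart → ℂ :=
  (∑ v : V, x (Sum.inl v) • eVec G v) + ∑ v : V, x (Sum.inr v) • eTilde G v

lemma psiMap_apply {V : Type} [Fintype V] [DecidableEq V] (G : SimpleGraph V)
    (x : V ⊕ V → ℂ) (b : G.Dart) :
    psiMap G x b = x (Sum.inl b.fst) + x (Sum.inr b.snd) := by
  simp [psiMap, eVec, eTilde, Finset.sum_apply, Pi.add_apply, mul_ite, mul_one, mul_zero,
    Finset.sum_ite_eq']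

/-- Sum over darts with a given tail equals sum over the neighbors. -/
lemma sum_dart_fst_eq {V : Type} [Fintype V] [DecidableEq V] (G : SimpleGraph V)
    [DecidableRel G.Adj] (w : V) (F : V → ℂ) :
    (∑ c : G.Dart, if c.fst = w then F c.snd else 0) = ∑ u ∈ G.neighborFinset w, F u := by
  classical
  rw [← Finset.sum_filter]
  refine Finset.sum_bij' (fun c _ => c.snd) (fun u hu => SimpleGraph.Dart.mk (w, u)
    (by simpa using (G.mem_neighborFinset w u).mp hu)) ?_ ?_ ?_ ?_ ?_
  · intro c hc
    simp only [Finset.mem_filter, Finset.mem_univ, true_and] at hc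
    subst hc
    exact (G.mem_neighborFinset _ _).mpr c.adj
  · intro u hu; simp
  · intro c hc
    simp only [Finset.mem_filter, Finset.mem_univ, true_and] at hc
    exact SimpleGraph.Dart.ext _ _ (Prod.ext hc.symm rfl)
  · intro u hu; rfl
  · intro c hc; rfl

/-- One-step intertwining: `ψ ∘ Ĉ = M ∘ ψ`. -/
lemma psi_Chat_step {V : Type} [Fintype V] [DecidableEq V]
    (G : SimpleGraph V) [DecidableRel G.Adj]
    (d : ℕ) (hd : ((d : ℂ) - 1) ≠ 0) (hreg : G.IsRegularOfDegree d)
    (x : V ⊕ V → ℂ) :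
    psiMap G ((Chat G d).mulVec x) = (transM G d).mulVec (psiMap G x) := by
  classical
  funext b
  rw [psiMap_apply]
  set A := x (Sum.inl b.snd) with hA
  set S := ∑ u ∈ G.neighborFinset b.snd, x (Sum.inr u) with hS
  -- RHS computation
  have hrhs : (transM G d).mulVec (psiMap G x) b
      = ∑ c : G.Dart, if c.fst = b.snd then
          (if c.snd = b.fst then 0 else ((d : ℂ) - 1)⁻¹ * (A + x (Sum.inr c.snd)))
          else 0 := by
    rw [Matrix.mulVec, dotProduct]
    refine Finset.sum_congr rfl fun c _ => ?_
    rw [psiMap_apply, transM]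
    by_cases h1 : c.fst = b.snd
    · by_cases h2 : c.snd = b.fst
      · have hcb : c = b.symm := SimpleGraph.Dart.ext _ _ (Prod.ext h1 h2)
        simp [hcb, h1, h2]
      · have hcb : c ≠ b.symm := by
          intro h; apply h2; rw [h]; rfl
        rw [if_pos ⟨h1.symm, hcb⟩, if_pos h1, if_neg h2, h1]
    · have h1' : ¬ (b.snd = c.fst) := fun h => h1 h.symm
      simp [h1, h1']
  rw [hrhs, sum_dart_fst_eq G b.snd
    (fun u => if u = b.fst then 0 else ((d : ℂ) - 1)⁻¹ * (A + x (Sum.inr u)))]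
  have hmem : b.fst ∈ G.neighborFinset b.snd := by
    rw [SimpleGraph.mem_neighborFinset]; exact b.adj.symm
  have hcard : (G.neighborFinset b.snd).card = d := hreg b.snd
  have hsum : (∑ u ∈ G.neighborFinset b.snd,
        if u = b.fst then 0 else ((d : ℂ) - 1)⁻¹ * (A + x (Sum.inr u)))
      = (d : ℂ) * (((d : ℂ) - 1)⁻¹ * A) + ((d : ℂ) - 1)⁻¹ * S
        - ((d : ℂ) - 1)⁻¹ * (A + x (Sum.inr b.fst)) := by
    have key : ∀ u ∈ G.neighborFinset b.snd,
        (if u = b.fst then 0 else ((d : ℂ) - 1)⁻¹ * (A + x (Sum.inr u)))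
        = (((d : ℂ) - 1)⁻¹ * A + ((d : ℂ) - 1)⁻¹ * x (Sum.inr u))
          - (if u = b.fst then ((d : ℂ) - 1)⁻¹ * (A + x (Sum.inr u)) else 0) := by
      intro u _
      split_ifs with h
      · ring
      · ring
    rw [Finset.sum_congr rfl key, Finset.sum_sub_distrib, Finset.sum_add_distrib,
      Finset.sum_const, Finset.sum_ite_eq' _ b.fst, if_pos hmem, hcard, ← Finset.mul_sum,
      ← hS, nsmul_eq_mul]
  rw [hsum]
  -- LHS computation
  have hl1 : (Chat G d).mulVec x (Sum.inl b.fst) = -((d : ℂ) - 1)⁻¹ * x (Sum.inr b.fst) := by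
    rw [Matrix.mulVec, dotProduct, Fintype.sum_sum_type]
    simp [Chat, Matrix.one_apply, ite_mul, Finset.sum_ite_eq]
  have hl2 : (Chat G d).mulVec x (Sum.inr b.snd) = A + ((d : ℂ) - 1)⁻¹ * S := by
    rw [Matrix.mulVec, dotProduct, Fintype.sum_sum_type]
    simp only [Chat, Matrix.fromBlocks_apply₂₁, Matrix.fromBlocks_apply₂₂, Matrix.one_apply,
      Matrix.smul_apply, adjC, smul_eq_mul, ite_mul, one_mul, zero_mul, mul_ite, mul_one,
      mul_zero]
    rw [Finset.sum_ite_eq, if_pos (Finset.mem_univ _), ← Finset.sum_filter, hS, Finset.mul_sum]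
    congr 1
    apply Finset.sum_congr _ (fun _ _ => rfl)
    ext u
    simp [SimpleGraph.mem_neighborFinset]
  rw [hl1, hl2]
  field_simp
  ring

/-- `ψ(Ĉ^t (a ⊕ 0)) = M^t f` where `f = ∑_v a_v e_v`. -/
theorem psi_Chat_pow {V : Type} [Fintype V] [DecidableEq V]
    (G : SimpleGraph V) [DecidableRel G.Adj]
    (d : ℕ) (hd : 3 ≤ d) (hreg : G.IsRegularOfDegree d)
    (a : V → ℂ) (t : ℕ) :
    psiMap G ((Chat G d ^ t).mulVec (Sum.elim a 0)) =
      ((transM G d) ^ t).mulVec (∑ v : V, a v • eVec G v) := by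
  have hd1 : ((d : ℂ) - 1) ≠ 0 := by
    intro h
    have : (d : ℂ) = 1 := by linear_combination h
    have : d = 1 := Nat.cast_injective (R := ℂ) (by simpa using this)
    omega
  induction t with
  | zero =>
    simp only [pow_zero, Matrix.one_mulVec]
    funext b
    rw [psiMap_apply]
    simp [eVec, eTilde, Finset.sum_apply, mul_ite, mul_one, mul_zero, Finset.sum_ite_eq']
  | succ t ih =>
    rw [pow_succ', pow_succ', ← Matrix.mulVec_mulVec, ← Matrix.mulVec_mulVec,
      psi_Chat_step G d hd1 hreg, ih]
end

section
/- Let d ≥ 3 be an integer and let β be a real number with 0 < β ≤ d − 1 − √(d−1). Let μ be a real number with |μ| ≤ d − β. Define the sequence (z_t)_{t≥0} by z_0 = 0, z_1 = 1, and z_t = (μ z_{t−1} − z_{t−2})/(d−1) for t ≥ 2. Then |z_t| ≤ t ( (d−1−β)/(d−1) )^{t−1} for every integer t ≥ 1. -/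
lemma recurrence_bound_aux (s a q : ℝ) (L1 L2 : ℂ)
    (hsum : L1 + L2 = (s : ℂ)) (hprod : L1 * L2 = (a : ℂ))
    (hq1 : ‖L1‖ ≤ q) (hq2 : ‖L2‖ ≤ q)
    (z : ℕ → ℝ) (hz0 : z 0 = 0) (hz1 : z 1 = 1)
    (hrec : ∀ t, z (t + 2) = s * z (t + 1) - a * z t) :
    ∀ t, |z (t + 1)| ≤ ((t : ℝ) + 1) * q ^ t := by
  have hq0 : 0 ≤ q := le_trans (norm_nonneg _) hq1
  have key : ∀ t, (z (t + 1) : ℂ) - L2 * z t = L1 ^ t := by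
    intro t
    induction t with
    | zero => simp [hz0, hz1]
    | succ n ih =>
      have h2 : (z (n + 2) : ℂ) - L2 * z (n + 1) = L1 * ((z (n + 1) : ℂ) - L2 * z n) := by
        have h := hrec n
        push_cast [h]
        linear_combination (z n : ℂ) * hprod - (z (n + 1) : ℂ) * hsum
      rw [h2, ih]; ring
  intro t
  induction t with
  | zero => simp [hz1]
  | succ n ih =>
    have h := key (n + 1)
    have heq : (z (n + 2) : ℂ) = L2 * z (n + 1) + L1 ^ (n + 1) := by linear_combination h
    have hb : |z (n + 2)| ≤ ‖L2‖ * |z (n + 1)| + (‖L1‖) ^ (n + 1) := by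
      calc |z (n + 2)| = ‖((z (n + 2) : ℂ))‖ := by rw [Complex.norm_real, Real.norm_eq_abs]
        _ = ‖(L2 * z (n + 1) + L1 ^ (n + 1))‖ := by rw [heq]
        _ ≤ ‖(L2 * (z (n + 1) : ℂ))‖ + ‖(L1 ^ (n + 1))‖ :=
            norm_add_le _ _
        _ = ‖L2‖ * |z (n + 1)| + (‖L1‖) ^ (n + 1) := by
            rw [norm_mul, norm_pow, Complex.norm_real, Real.norm_eq_abs]
    calc |z (n + 2)| ≤ q * (((n : ℝ) + 1) * q ^ n) + q ^ (n + 1) := by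
          refine hb.trans (add_le_add ?_ (pow_le_pow_left₀ (norm_nonneg _) hq1 _))
          exact mul_le_mul hq2 ih (abs_nonneg _) hq0
      _ = (((n : ℕ) : ℝ) + 1 + 1) * q ^ (n + 1) := by ring
      _ = (((n + 1 : ℕ) : ℝ) + 1) * q ^ (n + 1) := by push_cast; ring

set_option maxHeartbeats 1000000 in
/-- Proposition 3 (`prop:drei`): bound on the solutions of the recurrence
`z_t = (μ z_{t−1} − z_{t−2})/(d−1)`, `z_0 = 0`, `z_1 = 1`:
if `|μ| ≤ d − β` with `0 < β ≤ d − 1 − √(d−1)`, then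
`|z_t| ≤ t ((d−1−β)/(d−1))^{t−1}` for all `t ≥ 1`. -/
theorem recurrence_bound (d : ℕ) (hd : 3 ≤ d) (β : ℝ) (hβ : 0 < β)
    (hβ' : β ≤ (d : ℝ) - 1 - Real.sqrt ((d : ℝ) - 1))
    (μ : ℝ) (hμ : |μ| ≤ (d : ℝ) - β)
    (z : ℕ → ℝ) (hz0 : z 0 = 0) (hz1 : z 1 = 1)
    (hrec : ∀ t : ℕ, z (t + 2) = (μ * z (t + 1) - z t) / ((d : ℝ) - 1)) :
    ∀ t : ℕ, 1 ≤ t →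
      |z t| ≤ (t : ℝ) * (((d : ℝ) - 1 - β) / ((d : ℝ) - 1)) ^ (t - 1) := by
  have hd3 : (3 : ℝ) ≤ (d : ℝ) := by exact_mod_cast hd
  have hd1 : (0 : ℝ) < (d : ℝ) - 1 := by linarith
  have hd2 : (2 : ℝ) ≤ (d : ℝ) - 1 := by linarith
  have hsq1 : (1 : ℝ) ≤ Real.sqrt ((d : ℝ) - 1) := Real.one_le_sqrt.mpr (by linarith)
  have hβd2 : β ≤ (d : ℝ) - 2 := by linarith
  have hsqd : Real.sqrt ((d : ℝ) - 1) ≤ (d : ℝ) - 1 - β := by linarith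
  have hrec' : ∀ t, z (t + 2) = (μ / ((d : ℝ) - 1)) * z (t + 1) - (1 / ((d : ℝ) - 1)) * z t := by
    intro t; rw [hrec t]; ring
  have main : ∀ n : ℕ, |z (n + 1)| ≤ (((n : ℕ) : ℝ) + 1) *
      (((d : ℝ) - 1 - β) / ((d : ℝ) - 1)) ^ n := by
    rcases le_or_gt 0 (μ ^ 2 - 4 * ((d : ℝ) - 1)) with hD | hD
    · -- real roots
      have hsD : Real.sqrt (μ ^ 2 - 4 * ((d : ℝ) - 1)) ^ 2 = μ ^ 2 - 4 * ((d : ℝ) - 1) :=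
        Real.sq_sqrt hD
      have hsDnn : 0 ≤ Real.sqrt (μ ^ 2 - 4 * ((d : ℝ) - 1)) := Real.sqrt_nonneg _
      have hμabs := abs_le.mp hμ
      have hμ2 : μ ^ 2 ≤ ((d : ℝ) - β) ^ 2 := by nlinarith [hμabs.1, hμabs.2]
      have hsDle : Real.sqrt (μ ^ 2 - 4 * ((d : ℝ) - 1)) ≤ (d : ℝ) - 2 - β := by
        have h1 : μ ^ 2 - 4 * ((d : ℝ) - 1) ≤ ((d : ℝ) - 2 - β) ^ 2 := by nlinarith
        have h2 := Real.sqrt_le_sqrt h1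
        rwa [Real.sqrt_sq (by linarith)] at h2
      set S := Real.sqrt (μ ^ 2 - 4 * ((d : ℝ) - 1)) with hSdef
      clear_value S
      have habs1 : |(μ + S) / (2 * ((d : ℝ) - 1))| ≤ ((d : ℝ) - 1 - β) / ((d : ℝ) - 1) := by
        rw [abs_div, abs_of_pos (by linarith : (0:ℝ) < 2 * ((d:ℝ)-1)),
          div_le_div_iff₀ (by linarith) hd1]
        have h3 : |μ + S| ≤ |μ| + S := by
          calc |μ + S| ≤ |μ| + |S| := abs_add_le _ _
            _ = |μ| + S := by rw [abs_of_nonneg hsDnn]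
        nlinarith
      have habs2 : |(μ - S) / (2 * ((d : ℝ) - 1))| ≤ ((d : ℝ) - 1 - β) / ((d : ℝ) - 1) := by
        rw [abs_div, abs_of_pos (by linarith : (0:ℝ) < 2 * ((d:ℝ)-1)),
          div_le_div_iff₀ (by linarith) hd1]
        have h3 : |μ - S| ≤ |μ| + S := by
          calc |μ - S| ≤ |μ| + |S| := abs_sub _ _
            _ = |μ| + S := by rw [abs_of_nonneg hsDnn]
        nlinarith
      refine recurrence_bound_aux (μ / ((d:ℝ)-1)) (1 / ((d:ℝ)-1)) _
        (((μ + S) / (2 * ((d : ℝ) - 1)) : ℝ) : ℂ) (((μ - S) / (2 * ((d : ℝ) - 1)) : ℝ) : ℂ)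
        ?_ ?_ ?_ ?_ z hz0 hz1 hrec'
      · have h4 : (μ + S) / (2 * ((d : ℝ) - 1)) + (μ - S) / (2 * ((d : ℝ) - 1))
            = μ / ((d:ℝ)-1) := by field_simp; ring
        exact_mod_cast h4
      · have hmul : (μ + S) * (μ - S) = 4 * ((d : ℝ) - 1) := by nlinarith [hsD]
        have h4 : (μ + S) / (2 * ((d : ℝ) - 1)) * ((μ - S) / (2 * ((d : ℝ) - 1)))
            = 1 / ((d:ℝ)-1) := by
          rw [div_mul_div_comm, hmul]
          rw [div_eq_div_iff (by positivity) (by linarith)]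
          ring
        exact_mod_cast h4
      · rwa [Complex.norm_real, Real.norm_eq_abs]
      · rwa [Complex.norm_real, Real.norm_eq_abs]
    · -- complex conjugate roots
      have hynn : (0:ℝ) ≤ 4 * ((d : ℝ) - 1) - μ ^ 2 := by linarith
      have hynum : Real.sqrt (4 * ((d : ℝ) - 1) - μ ^ 2) ^ 2 = 4 * ((d : ℝ) - 1) - μ ^ 2 :=
        Real.sq_sqrt hynn
      set T := Real.sqrt (4 * ((d : ℝ) - 1) - μ ^ 2) with hTdef
      have hTnn : 0 ≤ T := Real.sqrt_nonneg _
      set x : ℝ := μ / (2 * ((d : ℝ) - 1)) with hx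
      set y : ℝ := T / (2 * ((d : ℝ) - 1)) with hy
      clear_value T x y
      have hxy : x ^ 2 + y ^ 2 = 1 / ((d : ℝ) - 1) := by
        rw [hx, hy, div_pow, div_pow, ← add_div, hynum,
          div_eq_div_iff (by positivity) (by linarith)]
        ring_nf
      have hsqpos : (0:ℝ) < Real.sqrt ((d : ℝ) - 1) := by linarith
      have habs : Real.sqrt (x ^ 2 + y ^ 2) ≤ ((d : ℝ) - 1 - β) / ((d : ℝ) - 1) := by
        rw [hxy, Real.sqrt_div' 1 (le_of_lt hd1), Real.sqrt_one,
          div_le_div_iff₀ hsqpos hd1]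
        calc 1 * ((d:ℝ) - 1) = Real.sqrt ((d:ℝ)-1) * Real.sqrt ((d:ℝ)-1) := by
              rw [Real.mul_self_sqrt (le_of_lt hd1)]; ring
          _ ≤ ((d:ℝ) - 1 - β) * Real.sqrt ((d:ℝ)-1) :=
              mul_le_mul_of_nonneg_right hsqd (le_of_lt hsqpos)
      have hA1 : ‖((x:ℂ) + (y:ℂ) * Complex.I)‖ = Real.sqrt (x ^ 2 + y ^ 2) :=
        Complex.norm_add_mul_I x y
      have hA2 : ‖((x:ℂ) - (y:ℂ) * Complex.I)‖ = Real.sqrt (x ^ 2 + y ^ 2) := by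
        have h5 : ((x:ℂ) - (y:ℂ) * Complex.I) = ((x:ℂ) + ((-y : ℝ):ℂ) * Complex.I) := by
          push_cast; ring
        rw [h5, Complex.norm_add_mul_I]; ring_nf
      refine recurrence_bound_aux (μ / ((d:ℝ)-1)) (1 / ((d:ℝ)-1)) _
        ((x:ℂ) + (y:ℂ) * Complex.I) ((x:ℂ) - (y:ℂ) * Complex.I)
        ?_ ?_ ?_ ?_ z hz0 hz1 hrec'
      · have h2x : x + x = μ / ((d : ℝ) - 1) := by rw [hx]; field_simp; ring
        calc ((x:ℂ) + (y:ℂ) * Complex.I) + ((x:ℂ) - (y:ℂ) * Complex.I)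
            = ((x + x : ℝ) : ℂ) := by push_cast; ring
          _ = ((μ / ((d : ℝ) - 1) : ℝ) : ℂ) := by rw [h2x]
      · calc ((x:ℂ) + (y:ℂ) * Complex.I) * ((x:ℂ) - (y:ℂ) * Complex.I)
            = ((x ^ 2 + y ^ 2 : ℝ) : ℂ) := by
              push_cast; linear_combination (-(y:ℂ) ^ 2) * Complex.I_sq
          _ = ((1 / ((d : ℝ) - 1) : ℝ) : ℂ) := by rw [hxy]
      · rw [hA1]; exact habs
      · rw [hA2]; exact habs
  intro t ht
  obtain ⟨n, rfl⟩ : ∃ n, t = n + 1 := ⟨t - 1, (Nat.succ_pred_eq_of_pos ht).symm⟩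
  have := main n
  simpa [Nat.add_sub_cancel] using this
end

section
/- Suppose every eigenvalue μ of C possessing an eigenvector orthogonal to the all-ones vector satisfies |μ| ≤ d − β, where 0 < β ≤ d − 1 − √(d−1) (so in particular β < d − 2). Let f ∈ ℂ^{2B} satisfy Σ_b f_b = 0 (zero trace). Then for every integer t ≥ 1, ‖M^t f‖_{ℂ^{2B}} ≤ (5(d−1)/(2(d−2−β))) · ‖f‖_{ℂ^{2B}} · t · ( (d−1−β)/(d−1) )^{t}. -/
open scoped BigOperators

/-- A matrix acting on Euclidean (ℓ²) space by matrix-vector multiplication. -/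
noncomputable def act {ι : Type} [Fintype ι] (A : Matrix ι ι ℂ) (x : EuclideanSpace ℂ ι) :
    EuclideanSpace ℂ ι :=
  (WithLp.equiv 2 (ι → ℂ)).symm (A.mulVec (WithLp.equiv 2 (ι → ℂ) x))

set_option maxHeartbeats 1600000
set_option linter.unusedSectionVars false
set_option linter.unusedVariables false

open Finset

noncomputable def sseq (A B : ℂ) : ℕ → ℂ
  | 0 => 0
  | 1 => 1
  | (n+2) => A * sseq A B (n+1) - B * sseq A B n

namespace GOD

lemma sseq_closed (A B l₁ l₂ : ℂ) (h1 : l₁ + l₂ = A) (h2 : l₁ * l₂ = B) :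
    ∀ t : ℕ, sseq A B (t+1) = l₁ * sseq A B t + l₂ ^ t := by
  intro t
  induction t with
  | zero => simp [show sseq A B 0 = 0 from rfl, show sseq A B 1 = 1 from rfl]
  | succ n ih =>
    rw [show sseq A B (n+2) = A * sseq A B (n+1) - B * sseq A B n from rfl, ih, ← h1, ← h2]
    ring

lemma sseq_abs_bound (A B l₁ l₂ : ℂ) (ρ : ℝ) (hρ : 0 < ρ) (h1 : l₁ + l₂ = A) (h2 : l₁ * l₂ = B)
    (ha : ‖l₁‖ ≤ ρ) (hb : ‖l₂‖ ≤ ρ) :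
    ∀ t : ℕ, ‖sseq A B t‖ * ρ ≤ (t:ℝ) * ρ ^ t := by
  intro t
  induction t with
  | zero => simp [show sseq A B 0 = 0 from rfl]
  | succ n ih =>
    rw [sseq_closed A B l₁ l₂ h1 h2 n]
    calc ‖l₁ * sseq A B n + l₂ ^ n‖ * ρ
        ≤ (‖l₁‖ * ‖sseq A B n‖ + ‖l₂‖ ^ n) * ρ := by
          apply mul_le_mul_of_nonneg_right _ hρ.le
          calc ‖l₁ * sseq A B n + l₂ ^ n‖
              ≤ ‖l₁ * sseq A B n‖ + ‖l₂ ^ n‖ := norm_add_le _ _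
            _ = ‖l₁‖ * ‖sseq A B n‖ + ‖l₂‖ ^ n := by
                rw [norm_mul, norm_pow]
      _ ≤ (ρ * ‖sseq A B n‖ + ρ ^ n) * ρ := by
          apply mul_le_mul_of_nonneg_right _ hρ.le
          gcongr
      _ = ρ * (‖sseq A B n‖ * ρ) + ρ ^ (n+1) := by ring
      _ ≤ ρ * ((n:ℝ) * ρ ^ n) + ρ ^ (n+1) := by
          apply add_le_add_left
          exact mul_le_mul_of_nonneg_left ih hρ.le
      _ = ((n:ℝ) + 1) * ρ ^ (n+1) := by ring
      _ = ((n+1 : ℕ):ℝ) * ρ ^ (n+1) := by push_cast; ring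

lemma exists_lam (D β μ : ℝ) (hD : 3 ≤ D) (hβ : 0 < β) (hβ' : β ≤ D - 1 - Real.sqrt (D-1))
    (hμ : |μ| ≤ D - β) :
    ∃ l₁ l₂ : ℂ, l₁ + l₂ = (μ : ℂ) / ((D:ℂ) - 1) ∧ l₁ * l₂ = ((D:ℂ) - 1)⁻¹ ∧
      ‖l₁‖ ≤ (D - 1 - β)/(D - 1) ∧ ‖l₂‖ ≤ (D - 1 - β)/(D - 1) := by
  have hD1 : (0:ℝ) < D - 1 := by linarith
  have hDC : ((D:ℂ) - 1) ≠ 0 := by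
    have h : ((D:ℂ) - 1) = (((D - 1 : ℝ)) : ℂ) := by push_cast; ring
    rw [h]
    exact_mod_cast hD1.ne'
  have hsq : Real.sqrt (D-1) ^ 2 = D - 1 := Real.sq_sqrt hD1.le
  have hs1 : 1 ≤ Real.sqrt (D-1) := by
    nlinarith [Real.sqrt_nonneg (D-1)]
  have hsle : Real.sqrt (D-1) ≤ D - 1 - β := by linarith
  have hβ2 : β ≤ D - 2 := by linarith
  have hρpos : 0 < (D - 1 - β)/(D - 1) := by
    apply div_pos _ hD1
    linarith
  set ρ := (D - 1 - β)/(D - 1) with hρ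
  have hρsq : (D-1)⁻¹ ≤ ρ^2 := by
    rw [hρ, div_pow, inv_eq_one_div, div_le_div_iff₀ hD1 (by positivity)]
    have key : D - 1 ≤ (D-1-β)^2 := by nlinarith [hsq, hsle, Real.sqrt_nonneg (D-1)]
    nlinarith [mul_le_mul_of_nonneg_right key hD1.le]
  have hsqrtρ : Real.sqrt ((D-1)⁻¹) ≤ ρ := by
    calc Real.sqrt ((D-1)⁻¹) ≤ Real.sqrt (ρ^2) := Real.sqrt_le_sqrt hρsq
      _ = ρ := Real.sqrt_sq hρpos.le
  by_cases hcase : μ^2 ≤ 4*(D-1)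
  · set r := Real.sqrt (4*(D-1) - μ^2) with hrdef
    have hr2 : r^2 = 4*(D-1) - μ^2 := Real.sq_sqrt (by linarith)
    have hre : (μ/(2*(D-1)))^2 + (r/(2*(D-1)))^2 = (D-1)⁻¹ := by
      field_simp
      nlinarith
    have habs1 : ∀ b : ℝ, ‖↑(μ/(2*(D-1))) + ↑b * Complex.I‖ = Real.sqrt ((μ/(2*(D-1)))^2 + b^2) := by
      intro b
      rw [Complex.norm_def, Complex.normSq_add_mul_I]
    refine ⟨(↑(μ/(2*(D-1))) + ↑(r/(2*(D-1))) * Complex.I),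
            (↑(μ/(2*(D-1))) + ↑(-(r/(2*(D-1)))) * Complex.I), ?_, ?_, ?_, ?_⟩
    · push_cast
      field_simp
      ring
    · have hC : ((μ/(2*(D-1)) : ℝ) : ℂ)^2 + ((r/(2*(D-1)) : ℝ):ℂ)^2 = ((D:ℂ)-1)⁻¹ := by
        calc ((μ/(2*(D-1)) : ℝ) : ℂ)^2 + ((r/(2*(D-1)) : ℝ):ℂ)^2
            = (((μ/(2*(D-1)))^2 + (r/(2*(D-1)))^2 : ℝ) : ℂ) := by push_cast; ring
          _ = (((D-1)⁻¹ : ℝ) : ℂ) := by rw [hre]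
          _ = ((D:ℂ)-1)⁻¹ := by push_cast; ring
      calc (↑(μ/(2*(D-1))) + ↑(r/(2*(D-1))) * Complex.I) * (↑(μ/(2*(D-1))) + ↑(-(r/(2*(D-1)))) * Complex.I)
          = ((μ/(2*(D-1)) : ℝ) : ℂ)^2 - (((r/(2*(D-1)):ℝ):ℂ) * Complex.I)^2 := by push_cast; ring
        _ = ((μ/(2*(D-1)) : ℝ) : ℂ)^2 + ((r/(2*(D-1)) : ℝ):ℂ)^2 := by
            rw [mul_pow, Complex.I_sq]; ring
        _ = ((D:ℂ)-1)⁻¹ := hC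
    · rw [habs1, show (μ/(2*(D-1)))^2 + (r/(2*(D-1)))^2 = (D-1)⁻¹ from hre]
      exact hsqrtρ
    · rw [habs1]
      rw [show (μ/(2*(D-1)))^2 + (-(r/(2*(D-1))))^2 = (D-1)⁻¹ by rw [← hre]; ring]
      exact hsqrtρ
  · have hdel0 : (0:ℝ) ≤ μ^2 - 4*(D-1) := by linarith [not_le.mp hcase]
    set δ := Real.sqrt (μ^2 - 4*(D-1)) with hδdef
    have hδ2 : δ^2 = μ^2 - 4*(D-1) := Real.sq_sqrt hdel0
    have hδ0 : 0 ≤ δ := Real.sqrt_nonneg _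
    have h1 : μ^2 ≤ (D-β)^2 := by
      nlinarith [sq_abs μ, hμ, abs_nonneg μ]
    have hDb : (0:ℝ) ≤ D - 2 - β := by linarith
    have h4 : δ ≤ D - 2 - β := by
      calc δ ≤ Real.sqrt ((D-β)^2 - 4*(D-1)) := Real.sqrt_le_sqrt (by linarith)
        _ ≤ Real.sqrt ((D-2-β)^2) := Real.sqrt_le_sqrt (by nlinarith)
        _ = |D-2-β| := Real.sqrt_sq_eq_abs _
        _ = D-2-β := abs_of_nonneg hDb
    have hbound : ∀ x : ℝ, |x| ≤ D - β → ‖((((x+δ)/(2*(D-1)) : ℝ)):ℂ)‖ ≤ ρ := by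
      intro x hx
      rw [Complex.norm_real, Real.norm_eq_abs, abs_div, abs_of_pos (by linarith : (0:ℝ) < 2*(D-1)), hρ,
        div_le_div_iff₀ (by linarith) hD1]
      have : |x + δ| ≤ (D - β) + (D - 2 - β) := by
        calc |x + δ| ≤ |x| + |δ| := abs_add_le _ _
          _ = |x| + δ := by rw [abs_of_nonneg hδ0]
          _ ≤ (D - β) + (D - 2 - β) := by linarith
      nlinarith
    have hμ2 : |(-μ)| ≤ D - β := by rw [abs_neg]; exact hμ
    refine ⟨↑((μ+δ)/(2*(D-1))), ↑((μ-δ)/(2*(D-1))), ?_, ?_, ?_, ?_⟩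
    · push_cast
      field_simp
      ring
    · have hmm : (μ+δ)*(μ-δ) = 4*(D-1) := by nlinarith [hδ2]
      have hre : ((μ+δ)/(2*(D-1))) * ((μ-δ)/(2*(D-1))) = (D-1)⁻¹ := by
        rw [div_mul_div_comm, hmm]
        have hne : D - 1 ≠ 0 := hD1.ne'
        field_simp
        ring
      calc (((μ+δ)/(2*(D-1)) : ℝ) : ℂ) * (((μ-δ)/(2*(D-1)) : ℝ) : ℂ)
          = ((((μ+δ)/(2*(D-1))) * ((μ-δ)/(2*(D-1))) : ℝ) : ℂ) := by push_cast; ring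
        _ = (((D-1)⁻¹ : ℝ) : ℂ) := by rw [hre]
        _ = ((D:ℂ)-1)⁻¹ := by push_cast; ring
    · exact hbound μ hμ
    · have : ((μ-δ)/(2*(D-1)) : ℝ) = -(((-μ)+δ)/(2*(D-1))) := by ring
      rw [this, Complex.ofReal_neg, norm_neg]
      exact hbound (-μ) hμ2

section EuclidHelpers
variable {ι : Type} [Fintype ι]

noncomputable def en (u : ι → ℂ) : ℝ := ‖(WithLp.equiv 2 (ι → ℂ)).symm u‖

noncomputable def ipd (u w : ι → ℂ) : ℂ := ∑ b, (starRingEnd ℂ) (u b) * w b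

lemma ipd_eq_inner (u w : ι → ℂ) :
    (inner ℂ ((WithLp.equiv 2 (ι → ℂ)).symm u) ((WithLp.equiv 2 (ι → ℂ)).symm w) : ℂ) = ipd u w := by
  rw [PiLp.inner_apply]; simp only [RCLike.inner_apply']; rfl

lemma en_nonneg (u : ι → ℂ) : 0 ≤ en u := norm_nonneg _

lemma en_sq (u : ι → ℂ) : en u ^ 2 = (ipd u u).re := by
  rw [← ipd_eq_inner, en]
  exact (inner_self_eq_norm_sq (𝕜 := ℂ) _).symm

lemma en_eq_sqrt_nsq (u : ι → ℂ) : en u = Real.sqrt (∑ b, Complex.normSq (u b)) := by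
  rw [en, EuclideanSpace.norm_eq]
  congr 1
  refine Finset.sum_congr rfl (fun b _ => ?_)
  rw [Complex.sq_norm]; rfl

lemma en_smul (z : ℂ) (u : ι → ℂ) : en (fun b => z * u b) = ‖z‖ * en u := by
  have : (WithLp.equiv 2 (ι → ℂ)).symm (fun b => z * u b)
      = z • (WithLp.equiv 2 (ι → ℂ)).symm u := by
    simp [show (fun b => z * u b) = z • u from rfl]
  rw [en, this, norm_smul]; rfl

lemma en_add_le (u w : ι → ℂ) : en (fun b => u b + w b) ≤ en u + en w := by
  have : (WithLp.equiv 2 (ι → ℂ)).symm (fun b => u b + w b)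
      = (WithLp.equiv 2 (ι → ℂ)).symm u + (WithLp.equiv 2 (ι → ℂ)).symm w := by
    simp [show (fun b => u b + w b) = u + w from rfl]
  rw [en, this]
  exact norm_add_le _ _

lemma pyth (u w : ι → ℂ) (h : ipd u w = 0) :
    en (fun b => u b + w b) ^ 2 = en u ^ 2 + en w ^ 2 := by
  have e : (WithLp.equiv 2 (ι → ℂ)).symm (fun b => u b + w b)
      = (WithLp.equiv 2 (ι → ℂ)).symm u + (WithLp.equiv 2 (ι → ℂ)).symm w := by
    simp [show (fun b => u b + w b) = u + w from rfl]
  rw [en, e, norm_add_sq (𝕜 := ℂ)]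
  have : (inner ℂ ((WithLp.equiv 2 (ι → ℂ)).symm u) ((WithLp.equiv 2 (ι → ℂ)).symm w) : ℂ) = 0 := by
    rw [ipd_eq_inner]; exact h
  rw [this]
  simp [en]

lemma ipd_sum_right {κ : Type} (s : Finset κ) (u : ι → ℂ) (F : κ → ι → ℂ) :
    ipd u (fun b => ∑ j ∈ s, F j b) = ∑ j ∈ s, ipd u (F j) := by
  unfold ipd
  rw [Finset.sum_comm]
  exact Finset.sum_congr rfl (fun b _ => by rw [Finset.mul_sum])

lemma ipd_sum_left {κ : Type} (s : Finset κ) (u : ι → ℂ) (F : κ → ι → ℂ) :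
    ipd (fun b => ∑ j ∈ s, F j b) u = ∑ j ∈ s, ipd (F j) u := by
  unfold ipd
  rw [Finset.sum_comm]
  refine Finset.sum_congr rfl (fun b _ => ?_)
  rw [map_sum, Finset.sum_mul]

lemma ipd_conj (u w : ι → ℂ) : ipd u w = (starRingEnd ℂ) (ipd w u) := by
  unfold ipd
  rw [map_sum]
  refine Finset.sum_congr rfl (fun b _ => ?_)
  rw [map_mul, Complex.conj_conj]
  ring

lemma ipd_add_left (p q w : ι → ℂ) :
    ipd (fun b => p b + q b) w = ipd p w + ipd q w := by
  unfold ipd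
  rw [← Finset.sum_add_distrib]
  refine Finset.sum_congr rfl (fun b _ => ?_)
  rw [map_add]; ring

lemma ipd_add_right (p q w : ι → ℂ) :
    ipd w (fun b => p b + q b) = ipd w p + ipd w q := by
  unfold ipd
  rw [← Finset.sum_add_distrib]
  refine Finset.sum_congr rfl (fun b _ => ?_)
  ring

lemma ipd_cmul_left (z : ℂ) (p w : ι → ℂ) :
    ipd (fun b => z * p b) w = (starRingEnd ℂ) z * ipd p w := by
  unfold ipd
  rw [Finset.mul_sum]
  refine Finset.sum_congr rfl (fun b _ => ?_)
  rw [map_mul]; ring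

lemma ipd_cmul_right (z : ℂ) (p w : ι → ℂ) :
    ipd w (fun b => z * p b) = z * ipd w p := by
  unfold ipd
  rw [Finset.mul_sum]
  refine Finset.sum_congr rfl (fun b _ => ?_)
  ring

lemma pyth_family {κ : Type} [DecidableEq κ] (s : Finset κ) (F : κ → ι → ℂ)
    (h : ∀ i ∈ s, ∀ j ∈ s, i ≠ j → ipd (F i) (F j) = 0) :
    en (fun b => ∑ j ∈ s, F j b) ^ 2 = ∑ j ∈ s, en (F j) ^ 2 := by
  have key : ipd (fun b => ∑ j ∈ s, F j b) (fun b => ∑ j ∈ s, F j b)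
      = ∑ j ∈ s, ipd (F j) (F j) := by
    rw [ipd_sum_left]
    refine Finset.sum_congr rfl (fun i hi => ?_)
    rw [ipd_sum_right]
    rw [Finset.sum_eq_single i (fun j hj hji => h i hi j hj (Ne.symm hji)) (fun hi' => absurd hi hi')]
  rw [en_sq, key, Complex.re_sum]
  exact Finset.sum_congr rfl (fun j _ => (en_sq (F j)).symm)

lemma pow_formula [DecidableEq ι] (M : Matrix ι ι ℂ) (u : ι → ℂ) (A B : ℂ)
    (h2 : M.mulVec (M.mulVec u) = A • M.mulVec u - B • u) :
    ∀ r : ℕ, (M^(r+1)).mulVec u = sseq A B (r+1) • M.mulVec u - (B * sseq A B r) • u := by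
  intro r
  induction r with
  | zero =>
    show (M^1).mulVec u = _
    rw [pow_one]
    show _ = sseq A B 1 • M.mulVec u - (B * sseq A B 0) • u
    rw [show sseq A B 1 = 1 from rfl, show sseq A B 0 = 0 from rfl]
    simp
  | succ n ih =>
    have hstep : (M^(n+2)).mulVec u = M.mulVec ((M^(n+1)).mulVec u) := by
      rw [Matrix.mulVec_mulVec, ← pow_succ']
    rw [hstep, ih, Matrix.mulVec_sub, Matrix.mulVec_smul, Matrix.mulVec_smul, h2]
    funext b
    simp only [Pi.sub_apply, Pi.smul_apply, smul_eq_mul,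
      show sseq A B (n+2) = A * sseq A B (n+1) - B * sseq A B n from rfl]
    ring

end EuclidHelpers

section GraphPart
variable {V : Type} [Fintype V] [DecidableEq V] {G : SimpleGraph V} [DecidableRel G.Adj]

noncomputable def Sv (G : SimpleGraph V) [DecidableRel G.Adj] (v : V) (u : G.Dart → ℂ) : ℂ :=
  ∑ c : G.Dart, if c.fst = v then u c else 0

noncomputable def Tv (G : SimpleGraph V) [DecidableRel G.Adj] (v : V) (u : G.Dart → ℂ) : ℂ :=
  ∑ c : G.Dart, if c.snd = v then u c else 0

lemma sum_Sv (u : G.Dart → ℂ) : ∑ v : V, Sv G v u = ∑ b : G.Dart, u b := by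
  unfold Sv
  rw [Finset.sum_comm]
  exact Finset.sum_congr rfl (fun c _ => by simp)

lemma Sv_mul_tl (v : V) (x : V → ℂ) (u : G.Dart → ℂ) :
    Sv G v (fun b => x b.fst * u b) = x v * Sv G v u := by
  unfold Sv
  rw [Finset.mul_sum]
  refine Finset.sum_congr rfl (fun c _ => ?_)
  by_cases h : c.fst = v <;> simp [h]

lemma sum_tl_mul (x : V → ℂ) (u : G.Dart → ℂ) :
    ∑ b : G.Dart, x b.fst * u b = ∑ v : V, x v * Sv G v u := by
  rw [← sum_Sv (fun b => x b.fst * u b)]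
  exact Finset.sum_congr rfl (fun v _ => Sv_mul_tl v x u)

lemma Tv_symm (v : V) (h : G.Dart → ℂ) : Tv G v (fun b => h b.symm) = Sv G v h := by
  unfold Sv Tv
  rw [← Fintype.sum_equiv (SimpleGraph.Dart.symm_involutive.toPerm _)
    (fun c => if c.fst = v then h c else 0) (fun c => if c.snd = v then h c.symm else 0) (fun c => by simp)]

lemma Sv_symm (v : V) (h : G.Dart → ℂ) : Sv G v (fun b => h b.symm) = Tv G v h := by
  unfold Sv Tv
  rw [← Fintype.sum_equiv (SimpleGraph.Dart.symm_involutive.toPerm _)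
    (fun c => if c.snd = v then h c else 0) (fun c => if c.fst = v then h c.symm else 0) (fun c => by simp)]

lemma sum_hd_mul (x : V → ℂ) (u : G.Dart → ℂ) :
    ∑ b : G.Dart, x b.snd * u b = ∑ v : V, x v * Tv G v u := by
  rw [← Fintype.sum_equiv (SimpleGraph.Dart.symm_involutive.toPerm _)
    (fun b : G.Dart => x b.fst * u b.symm) (fun b : G.Dart => x b.snd * u b) (fun c => by simp)]
  rw [sum_tl_mul x (fun b => u b.symm)]
  refine Finset.sum_congr rfl (fun v _ => ?_)
  rw [Sv_symm]

lemma card_fst_fiber (d : ℕ) (hreg : G.IsRegularOfDegree d) (v : V) :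
    (univ.filter (fun c : G.Dart => c.fst = v)).card = d :=
  (G.dart_fst_fiber_card_eq_degree v).trans (hreg v)

lemma card_snd_fiber (d : ℕ) (hreg : G.IsRegularOfDegree d) (v : V) :
    (univ.filter (fun c : G.Dart => c.snd = v)).card = d := by
  have h1 : (univ.filter (fun c : G.Dart => c.snd = v))
      = (univ.filter (fun c : G.Dart => c.fst = v)).image SimpleGraph.Dart.symm := by
    ext c
    simp only [mem_filter, mem_univ, true_and, mem_image]
    constructor
    · intro h; exact ⟨c.symm, by simp [h], by simp⟩
    · rintro ⟨a, ha, rfl⟩; simpa using ha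
  rw [h1, Finset.card_image_of_injective _ (SimpleGraph.Dart.symm_involutive.injective)]
  exact card_fst_fiber d hreg v

lemma Sv_const_one (d : ℕ) (hreg : G.IsRegularOfDegree d) (v : V) :
    Sv G v (fun _ => (1:ℂ)) = (d : ℂ) := by
  unfold Sv
  rw [Finset.sum_boole]
  rw [show (Finset.filter (fun c : G.Dart => c.fst = v) Finset.univ).card = d from card_fst_fiber d hreg v]

lemma Sv_tl (d : ℕ) (hreg : G.IsRegularOfDegree d) (v : V) (x : V → ℂ) :
    Sv G v (fun b => x b.fst) = (d : ℂ) * x v := by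
  have h := Sv_mul_tl (G := G) v x (fun _ => (1:ℂ))
  simp only [mul_one] at h
  rw [h, Sv_const_one d hreg, mul_comm]

lemma mulVec_adjC (x : V → ℂ) (v : V) :
    (adjC G).mulVec x v = ∑ w : V, if G.Adj v w then x w else 0 := by
  unfold Matrix.mulVec adjC dotProduct
  exact Finset.sum_congr rfl (fun w _ => by by_cases h : G.Adj v w <;> simp [h])

lemma Sv_hd (v : V) (x : V → ℂ) :
    Sv G v (fun b => x b.snd) = (adjC G).mulVec x v := by
  rw [mulVec_adjC]
  unfold Sv
  rw [← Finset.sum_filter, ← Finset.sum_filter]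
  refine Finset.sum_bij' (fun (c : G.Dart) (hc : c ∈ univ.filter (fun c : G.Dart => c.fst = v)) => c.snd)
    (fun (w : V) (hw : w ∈ univ.filter (fun w => G.Adj v w)) => SimpleGraph.Dart.mk (v, w) (by simpa using hw))
    ?_ ?_ ?_ ?_ ?_
  · intro c hc
    simp only [mem_filter, mem_univ, true_and] at hc ⊢
    rw [← hc]; exact c.adj
  · intro w hw; simp
  · intro c hc
    simp only [mem_filter, mem_univ, true_and] at hc
    ext <;> simp [hc]
  · intro w hw; rfl
  · intro c hc; rfl

lemma mulVec_transM (d : ℕ) (u : G.Dart → ℂ) (b : G.Dart) :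
    (transM G d).mulVec u b = ((d:ℂ) - 1)⁻¹ * (Sv G b.snd u - u b.symm) := by
  unfold Matrix.mulVec transM dotProduct Sv
  have h1 : ∀ c : G.Dart, (if b.snd = c.fst ∧ c ≠ b.symm then ((d : ℂ) - 1)⁻¹ else 0) * u c
      = ((d:ℂ)-1)⁻¹ * ((if c.fst = b.snd then u c else 0) - if c = b.symm then u c else 0) := by
    intro c
    by_cases h2 : c = b.symm
    · have hcon : ¬(b.snd = c.fst ∧ c ≠ b.symm) := fun hh => hh.2 h2
      rw [if_neg hcon, zero_mul, if_pos (show c.fst = b.snd by rw [h2]; rfl), if_pos h2, sub_self, mul_zero]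
    · by_cases h : c.fst = b.snd
      · rw [if_pos ⟨h.symm, h2⟩, if_pos h, if_neg h2, sub_zero]
      · rw [if_neg (fun hh => h hh.1.symm), zero_mul, if_neg h, if_neg h2, sub_zero, mul_zero]
  rw [Finset.sum_congr rfl (fun c _ => h1 c), ← Finset.mul_sum]
  congr 1
  rw [Finset.sum_sub_distrib]
  congr 1
  rw [Finset.sum_ite_eq' univ b.symm u]
  simp

lemma Sv_add (v : V) (p q : G.Dart → ℂ) :
    Sv G v (fun b => p b + q b) = Sv G v p + Sv G v q := by
  unfold Sv
  rw [← Finset.sum_add_distrib]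
  refine Finset.sum_congr rfl (fun c _ => ?_)
  by_cases h : c.fst = v <;> simp [h]

lemma Sv_cmul (v : V) (z : ℂ) (p : G.Dart → ℂ) :
    Sv G v (fun b => z * p b) = z * Sv G v p := by
  unfold Sv
  rw [Finset.mul_sum]
  refine Finset.sum_congr rfl (fun c _ => ?_)
  by_cases h : c.fst = v <;> simp [h]

lemma Tv_add (v : V) (p q : G.Dart → ℂ) :
    Tv G v (fun b => p b + q b) = Tv G v p + Tv G v q := by
  unfold Tv
  rw [← Finset.sum_add_distrib]
  refine Finset.sum_congr rfl (fun c _ => ?_)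
  by_cases h : c.snd = v <;> simp [h]

lemma Tv_cmul (v : V) (z : ℂ) (p : G.Dart → ℂ) :
    Tv G v (fun b => z * p b) = z * Tv G v p := by
  unfold Tv
  rw [Finset.mul_sum]
  refine Finset.sum_congr rfl (fun c _ => ?_)
  by_cases h : c.snd = v <;> simp [h]

lemma Sv_sum {κ : Type} (s : Finset κ) (v : V) (F : κ → G.Dart → ℂ) :
    Sv G v (fun b => ∑ j ∈ s, F j b) = ∑ j ∈ s, Sv G v (F j) := by
  unfold Sv
  rw [Finset.sum_comm]
  refine Finset.sum_congr rfl (fun c _ => ?_)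
  by_cases h : c.fst = v <;> simp [h]

lemma Tv_sum {κ : Type} (s : Finset κ) (v : V) (F : κ → G.Dart → ℂ) :
    Tv G v (fun b => ∑ j ∈ s, F j b) = ∑ j ∈ s, Tv G v (F j) := by
  unfold Tv
  rw [Finset.sum_comm]
  refine Finset.sum_congr rfl (fun c _ => ?_)
  by_cases h : c.snd = v <;> simp [h]

lemma Tv_tl (d : ℕ) (hreg : G.IsRegularOfDegree d) (v : V) (x : V → ℂ) :
    Tv G v (fun b => x b.fst) = Sv G v (fun b => x b.snd) :=
  Tv_symm v (fun c => x c.snd)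

lemma Tv_hd (d : ℕ) (hreg : G.IsRegularOfDegree d) (v : V) (x : V → ℂ) :
    Tv G v (fun b => x b.snd) = (d:ℂ) * x v :=
  (Tv_symm v (fun c => x c.fst)).trans (Sv_tl d hreg v x)

lemma hdC' (d : ℕ) (hd : 3 ≤ d) : ((d:ℂ) - 1) ≠ 0 := by
  have h3 : (3:ℝ) ≤ (d:ℝ) := by exact_mod_cast hd
  have : ((d:ℂ) - 1) = (((d:ℝ) - 1 : ℝ) : ℂ) := by push_cast; ring
  rw [this]
  exact_mod_cast (by linarith : (d:ℝ) - 1 ≠ 0)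

/-- Action of transM on a block vector, for an eigenvector `x`. -/
lemma Mblock (d : ℕ) (hd : 3 ≤ d) (hreg : G.IsRegularOfDegree d)
    (x : V → ℂ) (μ : ℂ) (heig : ∀ v, Sv G v (fun b => x b.snd) = μ * x v)
    (a bb : ℂ) :
    (transM G d).mulVec (fun b => a * x b.fst + bb * x b.snd)
      = fun dart => (-(bb * ((d:ℂ)-1)⁻¹)) * x dart.fst + (a + bb * μ * ((d:ℂ)-1)⁻¹) * x dart.snd := by
  have hdC : ((d:ℂ) - 1) ≠ 0 := hdC' d hd
  funext b
  rw [mulVec_transM]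
  have h1 : Sv G b.snd (fun c => a * x c.fst + bb * x c.snd)
      = a * ((d:ℂ) * x b.snd) + bb * (μ * x b.snd) := by
    rw [Sv_add, Sv_cmul, Sv_cmul, Sv_tl d hreg, heig]
  have h2 : a * x b.symm.fst + bb * x b.symm.snd = a * x b.snd + bb * x b.fst := rfl
  rw [h1, h2]
  field_simp
  ring

lemma M2block (d : ℕ) (hd : 3 ≤ d) (hreg : G.IsRegularOfDegree d)
    (x : V → ℂ) (μ : ℂ) (heig : ∀ v, Sv G v (fun b => x b.snd) = μ * x v)
    (a bb : ℂ) :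
    (transM G d).mulVec ((transM G d).mulVec (fun b => a * x b.fst + bb * x b.snd))
      = (μ * ((d:ℂ)-1)⁻¹) • (transM G d).mulVec (fun b => a * x b.fst + bb * x b.snd)
        - (((d:ℂ)-1)⁻¹) • (fun b => a * x b.fst + bb * x b.snd) := by
  have hdC : ((d:ℂ) - 1) ≠ 0 := hdC' d hd
  rw [Mblock d hd hreg x μ heig a bb, Mblock d hd hreg x μ heig]
  funext b
  simp only [Pi.sub_apply, Pi.smul_apply, smul_eq_mul]
  field_simp
  ring

lemma Npart (d : ℕ) (hd : 3 ≤ d) (hreg : G.IsRegularOfDegree d)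
    (h : G.Dart → ℂ) (hS : ∀ v, Sv G v h = 0) (hT : ∀ v, Tv G v h = 0) :
    (transM G d).mulVec h = fun b => (-(((d:ℂ)-1)⁻¹)) * h b.symm := by
  funext b
  rw [mulVec_transM]
  rw [hS b.snd]
  ring

lemma en_symm (h : G.Dart → ℂ) : en (fun b : G.Dart => h b.symm) = en h := by
  rw [en_eq_sqrt_nsq, en_eq_sqrt_nsq]
  congr 1
  exact Fintype.sum_equiv (SimpleGraph.Dart.symm_involutive.toPerm _)
    (fun b : G.Dart => Complex.normSq (h b.symm)) (fun b : G.Dart => Complex.normSq (h b))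
    (fun c => by simp)

lemma Npow (d : ℕ) (hd : 3 ≤ d) (hreg : G.IsRegularOfDegree d)
    (g : G.Dart → ℂ) (hS : ∀ v, Sv G v g = 0) (hT : ∀ v, Tv G v g = 0) :
    ∀ t : ℕ, ∃ h : G.Dart → ℂ, (∀ v, Sv G v h = 0) ∧ (∀ v, Tv G v h = 0) ∧
      en h = en g ∧
      ((transM G d)^t).mulVec g = fun b => ((-(((d:ℂ)-1)⁻¹))^t) * h b := by
  intro t
  induction t with
  | zero => exact ⟨g, hS, hT, rfl, by funext b; simp [Matrix.mulVec, dotProduct,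
      Matrix.one_apply, Finset.sum_ite_eq]⟩
  | succ n ih =>
    obtain ⟨h, hS', hT', hen, heq⟩ := ih
    refine ⟨fun b => h b.symm, fun v => by rw [Sv_symm]; exact hT' v,
      fun v => by rw [Tv_symm]; exact hS' v, by rw [en_symm]; exact hen, ?_⟩
    have hstep : ((transM G d)^(n+1)).mulVec g = (transM G d).mulVec (((transM G d)^n).mulVec g) := by
      rw [Matrix.mulVec_mulVec, ← pow_succ']
    rw [hstep, heq]
    have : (fun b => ((-(((d:ℂ)-1)⁻¹))^n) * h b) = ((-(((d:ℂ)-1)⁻¹))^n) • h := rfl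
    rw [this, Matrix.mulVec_smul, Npart d hd hreg h hS' hT']
    funext b
    simp only [Pi.smul_apply, smul_eq_mul]
    ring

lemma contraction (d : ℕ) (hd : 3 ≤ d) (hreg : G.IsRegularOfDegree d) (u : G.Dart → ℂ) :
    ∑ b : G.Dart, Complex.normSq ((transM G d).mulVec u b) ≤ ∑ b : G.Dart, Complex.normSq (u b) := by
  have hd0 : (0:ℝ) < (d:ℝ) - 1 := by
    have : (3:ℝ) ≤ (d:ℝ) := by exact_mod_cast hd
    linarith
  have hcard : ∀ b : G.Dart, (((univ.filter (fun c : G.Dart => c.fst = b.snd)).erase b.symm).card : ℝ) = (d:ℝ) - 1 := by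
    intro b
    have hmem : b.symm ∈ univ.filter (fun c : G.Dart => c.fst = b.snd) := by
      simp only [mem_filter, mem_univ, true_and]; rfl
    rw [Finset.card_erase_of_mem hmem, card_fst_fiber d hreg]
    have : 1 ≤ d := by omega
    push_cast [Nat.cast_sub this]
    ring
  have hform : ∀ b : G.Dart, (transM G d).mulVec u b
      = ((d:ℂ) - 1)⁻¹ * ∑ c ∈ (univ.filter (fun c : G.Dart => c.fst = b.snd)).erase b.symm, u c := by
    intro b
    rw [mulVec_transM]
    congr 1
    have hmem : b.symm ∈ univ.filter (fun c : G.Dart => c.fst = b.snd) := by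
      simp only [mem_filter, mem_univ, true_and]; rfl
    have h2 := Finset.sum_erase_add (univ.filter (fun c : G.Dart => c.fst = b.snd)) u hmem
    have h3 : Sv G b.snd u = ∑ c ∈ univ.filter (fun c : G.Dart => c.fst = b.snd), u c :=
      (Finset.sum_filter _ _).symm
    rw [h3, ← h2]; ring
  have key : ∀ b : G.Dart, Complex.normSq ((transM G d).mulVec u b)
      ≤ ((d:ℝ) - 1)⁻¹ * ∑ c ∈ (univ.filter (fun c : G.Dart => c.fst = b.snd)).erase b.symm, Complex.normSq (u c) := by
    intro b
    rw [hform b, Complex.normSq_mul, Complex.normSq_inv]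
    have hc1 : Complex.normSq ((d:ℂ) - 1) = ((d:ℝ)-1)^2 := by
      have : ((d:ℂ) - 1) = (((d:ℝ) - 1 : ℝ) : ℂ) := by push_cast; ring
      rw [this, Complex.normSq_ofReal]; ring
    rw [hc1]
    set s := (univ.filter (fun c : G.Dart => c.fst = b.snd)).erase b.symm with hs
    have habs : ‖∑ c ∈ s, u c‖ ≤ ∑ c ∈ s, ‖u c‖ := norm_sum_le _ _
    have h2 : Complex.normSq (∑ c ∈ s, u c) ≤ (∑ c ∈ s, ‖u c‖)^2 := by
      rw [← Complex.sq_norm]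
      exact pow_le_pow_left₀ (norm_nonneg _) habs 2
    have h3 : (∑ c ∈ s, ‖u c‖)^2 ≤ (s.card : ℝ) * ∑ c ∈ s, (‖u c‖)^2 :=
      sq_sum_le_card_mul_sum_sq
    have h4 : (s.card : ℝ) = (d:ℝ) - 1 := hcard b
    have h5 : ∑ c ∈ s, (‖u c‖)^2 = ∑ c ∈ s, Complex.normSq (u c) :=
      Finset.sum_congr rfl (fun c _ => Complex.sq_norm _)
    calc (((d:ℝ)-1)^2)⁻¹ * Complex.normSq (∑ c ∈ s, u c)
        ≤ (((d:ℝ)-1)^2)⁻¹ * (((d:ℝ) - 1) * ∑ c ∈ s, Complex.normSq (u c)) := by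
          apply mul_le_mul_of_nonneg_left _ (by positivity)
          rw [← h4, ← h5]
          exact le_trans h2 h3
      _ = ((d:ℝ) - 1)⁻¹ * ∑ c ∈ s, Complex.normSq (u c) := by
          field_simp
  have swap : ∑ b : G.Dart, ∑ c ∈ (univ.filter (fun c : G.Dart => c.fst = b.snd)).erase b.symm, Complex.normSq (u c)
      = ∑ c : G.Dart, ((d:ℝ) - 1) * Complex.normSq (u c) := by
    have h1 : ∀ b : G.Dart, ∑ c ∈ (univ.filter (fun c : G.Dart => c.fst = b.snd)).erase b.symm, Complex.normSq (u c)
        = ∑ c : G.Dart, (if c.fst = b.snd ∧ c ≠ b.symm then Complex.normSq (u c) else 0) := by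
      intro b
      rw [← Finset.sum_filter]
      congr 1
      ext c
      simp only [mem_erase, mem_filter, mem_univ, true_and]
      tauto
    rw [Finset.sum_congr rfl (fun b _ => h1 b), Finset.sum_comm]
    refine Finset.sum_congr rfl (fun c _ => ?_)
    have h2 : ∀ b : G.Dart, (c.fst = b.snd ∧ c ≠ b.symm) ↔ (b.snd = c.fst ∧ b ≠ c.symm) := by
      intro b
      constructor
      · rintro ⟨h, h2⟩
        refine ⟨h.symm, fun hb => h2 ?_⟩
        rw [hb]; simp
      · rintro ⟨h, h2⟩
        refine ⟨h.symm, fun hc => h2 ?_⟩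
        rw [hc]; simp
    rw [Finset.sum_congr rfl (fun b _ => by rw [if_congr (h2 b) rfl rfl])]
    have e1 : (∑ b : G.Dart, if b.snd = c.fst ∧ b ≠ c.symm then Complex.normSq (u c) else 0)
        = ((univ.filter (fun b : G.Dart => b.snd = c.fst ∧ b ≠ c.symm)).card : ℝ) * Complex.normSq (u c) := by
      rw [← Finset.sum_filter, Finset.sum_const, nsmul_eq_mul]
    have e2 : (univ.filter (fun b : G.Dart => b.snd = c.fst ∧ b ≠ c.symm))
        = (univ.filter (fun b : G.Dart => b.snd = c.fst)).erase c.symm := by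
      ext b
      simp only [mem_erase, mem_filter, mem_univ, true_and]
      tauto
    have e3 : c.symm ∈ univ.filter (fun b : G.Dart => b.snd = c.fst) := by
      simp only [mem_filter, mem_univ, true_and]; rfl
    rw [e1, e2, Finset.card_erase_of_mem e3, card_snd_fiber d hreg]
    have h1d : 1 ≤ d := by omega
    push_cast [Nat.cast_sub h1d]
    ring
  calc ∑ b : G.Dart, Complex.normSq ((transM G d).mulVec u b)
      ≤ ∑ b : G.Dart, ((d:ℝ) - 1)⁻¹ * ∑ c ∈ (univ.filter (fun c : G.Dart => c.fst = b.snd)).erase b.symm, Complex.normSq (u c) :=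
        Finset.sum_le_sum (fun b _ => key b)
    _ = ((d:ℝ) - 1)⁻¹ * ∑ b : G.Dart, ∑ c ∈ (univ.filter (fun c : G.Dart => c.fst = b.snd)).erase b.symm, Complex.normSq (u c) := by
        rw [Finset.mul_sum]
    _ = ((d:ℝ) - 1)⁻¹ * ∑ c : G.Dart, ((d:ℝ) - 1) * Complex.normSq (u c) := by rw [swap]
    _ = ∑ b : G.Dart, Complex.normSq (u b) := by
        rw [← Finset.mul_sum]
        field_simp

lemma en_contraction (d : ℕ) (hd : 3 ≤ d) (hreg : G.IsRegularOfDegree d) (u : G.Dart → ℂ) :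
    en ((transM G d).mulVec u) ≤ en u := by
  rw [en_eq_sqrt_nsq, en_eq_sqrt_nsq]
  exact Real.sqrt_le_sqrt (contraction d hd hreg u)

/-- inner products of block vectors built from orthogonal eigenvectors. -/
lemma ipd_blocks (d : ℕ) (hd : 3 ≤ d) (hreg : G.IsRegularOfDegree d)
    (x y : V → ℂ) (μy : ℂ) (heigy : ∀ v, Sv G v (fun b => y b.snd) = μy * y v)
    (horth : (∑ v, (starRingEnd ℂ) (x v) * y v) = 0) (a1 b1 a2 b2 : ℂ) :
    ipd (fun b : G.Dart => a1 * x b.fst + b1 * x b.snd) (fun b : G.Dart => a2 * y b.fst + b2 * y b.snd) = 0 := by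
  have A1 : ipd (fun b : G.Dart => x b.fst) (fun b : G.Dart => y b.fst) = 0 := by
    unfold ipd
    rw [sum_tl_mul (fun v => (starRingEnd ℂ) (x v)) (fun b => y b.fst)]
    calc ∑ v, (starRingEnd ℂ) (x v) * Sv G v (fun b => y b.fst)
        = ∑ v, (d:ℂ) * ((starRingEnd ℂ) (x v) * y v) := by
          refine Finset.sum_congr rfl (fun v _ => ?_)
          rw [Sv_tl d hreg]; ring
      _ = (d:ℂ) * ∑ v, (starRingEnd ℂ) (x v) * y v := by rw [Finset.mul_sum]
      _ = 0 := by rw [horth, mul_zero]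
  have A2 : ipd (fun b : G.Dart => x b.fst) (fun b : G.Dart => y b.snd) = 0 := by
    unfold ipd
    rw [sum_tl_mul (fun v => (starRingEnd ℂ) (x v)) (fun b => y b.snd)]
    calc ∑ v, (starRingEnd ℂ) (x v) * Sv G v (fun b => y b.snd)
        = ∑ v, μy * ((starRingEnd ℂ) (x v) * y v) := by
          refine Finset.sum_congr rfl (fun v _ => ?_)
          rw [heigy]; ring
      _ = μy * ∑ v, (starRingEnd ℂ) (x v) * y v := by rw [Finset.mul_sum]
      _ = 0 := by rw [horth, mul_zero]
  have A3 : ipd (fun b : G.Dart => x b.snd) (fun b : G.Dart => y b.fst) = 0 := by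
    unfold ipd
    rw [sum_hd_mul (fun v => (starRingEnd ℂ) (x v)) (fun b => y b.fst)]
    calc ∑ v, (starRingEnd ℂ) (x v) * Tv G v (fun b => y b.fst)
        = ∑ v, μy * ((starRingEnd ℂ) (x v) * y v) := by
          refine Finset.sum_congr rfl (fun v _ => ?_)
          rw [Tv_tl d hreg, heigy]; ring
      _ = μy * ∑ v, (starRingEnd ℂ) (x v) * y v := by rw [Finset.mul_sum]
      _ = 0 := by rw [horth, mul_zero]
  have A4 : ipd (fun b : G.Dart => x b.snd) (fun b : G.Dart => y b.snd) = 0 := by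
    unfold ipd
    rw [sum_hd_mul (fun v => (starRingEnd ℂ) (x v)) (fun b => y b.snd)]
    calc ∑ v, (starRingEnd ℂ) (x v) * Tv G v (fun b => y b.snd)
        = ∑ v, (d:ℂ) * ((starRingEnd ℂ) (x v) * y v) := by
          refine Finset.sum_congr rfl (fun v _ => ?_)
          rw [Tv_hd d hreg]; ring
      _ = (d:ℂ) * ∑ v, (starRingEnd ℂ) (x v) * y v := by rw [Finset.mul_sum]
      _ = 0 := by rw [horth, mul_zero]
  simp only [ipd_add_left, ipd_add_right, ipd_cmul_left, ipd_cmul_right]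
  rw [A1, A2, A3, A4]
  ring

/-- block vectors are orthogonal to null vectors. -/
lemma ipd_block_null (x : V → ℂ) (h : G.Dart → ℂ)
    (hS : ∀ v, Sv G v h = 0) (hT : ∀ v, Tv G v h = 0) (a1 b1 : ℂ) :
    ipd (fun b : G.Dart => a1 * x b.fst + b1 * x b.snd) h = 0 := by
  have B1 : ipd (fun b : G.Dart => x b.fst) h = 0 := by
    unfold ipd
    rw [sum_tl_mul (fun v => (starRingEnd ℂ) (x v)) h]
    refine Finset.sum_eq_zero (fun v _ => ?_)
    rw [hS v, mul_zero]
  have B2 : ipd (fun b : G.Dart => x b.snd) h = 0 := by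
    unfold ipd
    rw [sum_hd_mul (fun v => (starRingEnd ℂ) (x v)) h]
    refine Finset.sum_eq_zero (fun v _ => ?_)
    rw [hT v, mul_zero]
  simp only [ipd_add_left, ipd_cmul_left]
  rw [B1, B2]
  ring

lemma Sv_sub (v : V) (p q : G.Dart → ℂ) :
    Sv G v (fun b => p b - q b) = Sv G v p - Sv G v q := by
  unfold Sv
  rw [← Finset.sum_sub_distrib]
  refine Finset.sum_congr rfl (fun c _ => ?_)
  by_cases h : c.fst = v <;> simp [h]

lemma Tv_sub (v : V) (p q : G.Dart → ℂ) :
    Tv G v (fun b => p b - q b) = Tv G v p - Tv G v q := by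
  unfold Tv
  rw [← Finset.sum_sub_distrib]
  refine Finset.sum_congr rfl (fun c _ => ?_)
  by_cases h : c.snd = v <;> simp [h]

lemma sum_mulVec_adjC (d : ℕ) (hreg : G.IsRegularOfDegree d) (z : V → ℂ) :
    ∑ v, (adjC G).mulVec z v = (d:ℂ) * ∑ w, z w := by
  have h1 : ∀ w : V, (univ.filter (fun v => G.Adj v w)).card = d := by
    intro w
    have he : (univ.filter (fun v => G.Adj v w)) = G.neighborFinset w := by
      ext v
      simp [SimpleGraph.mem_neighborFinset, G.adj_comm]
    rw [he]
    exact hreg w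
  calc ∑ v, (adjC G).mulVec z v
      = ∑ v, ∑ w, if G.Adj v w then z w else 0 := Finset.sum_congr rfl (fun v _ => mulVec_adjC z v)
    _ = ∑ w, ∑ v, if G.Adj v w then z w else 0 := Finset.sum_comm
    _ = ∑ w, ((univ.filter (fun v => G.Adj v w)).card : ℂ) * z w := by
        refine Finset.sum_congr rfl (fun w _ => ?_)
        rw [← Finset.sum_filter, Finset.sum_const, nsmul_eq_mul]
    _ = (d:ℂ) * ∑ w, z w := by
        rw [Finset.mul_sum]
        exact Finset.sum_congr rfl (fun w _ => by rw [h1 w])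

lemma equiv_sum_apply {κ : Type} (s : Finset κ) (F : κ → EuclideanSpace ℂ V) (v : V) :
    (WithLp.equiv 2 (V → ℂ)) (∑ j ∈ s, F j) v = ∑ j ∈ s, (WithLp.equiv 2 (V → ℂ)) (F j) v := by
  induction s using Finset.cons_induction with
  | empty => rfl
  | cons a s ha ih =>
    rw [Finset.sum_cons, Finset.sum_cons, ← ih]
    rfl

end GraphPart
end GOD

/-- Theorem 4 (`thm:general`): if every eigenvalue `μ` of `C` with an eigenvector orthogonal
to the all-ones vector satisfies `|μ| ≤ d − β`, with `0 < β ≤ d − 1 − √(d−1)`, then for every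
zero-trace observable `f ∈ ℂ^{2B}` and every `t ≥ 1`,
`‖M^t f‖ ≤ (5(d−1)/(2(d−2−β))) ‖f‖ t ((d−1−β)/(d−1))^t`. -/
theorem general_observable_decay {V : Type} [Fintype V] [DecidableEq V]
    (G : SimpleGraph V) [DecidableRel G.Adj]
    (d : ℕ) (hd : 3 ≤ d) (hreg : G.IsRegularOfDegree d)
    (β : ℝ) (hβ : 0 < β) (hβ' : β ≤ (d : ℝ) - 1 - Real.sqrt ((d : ℝ) - 1))
    (hspec : ∀ (μ : ℂ) (x : V → ℂ), x ≠ 0 → (adjC G).mulVec x = μ • x →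
      (∑ v : V, x v) = 0 → ‖μ‖ ≤ (d : ℝ) - β)
    (f : EuclideanSpace ℂ G.Dart) (hf : (∑ b : G.Dart, f b) = 0) :
    ∀ t : ℕ, 1 ≤ t →
      ‖act ((transM G d) ^ t) f‖ ≤
        5 * ((d : ℝ) - 1) / (2 * ((d : ℝ) - 2 - β)) * ‖f‖ * (t : ℝ) *
          (((d : ℝ) - 1 - β) / ((d : ℝ) - 1)) ^ t := by
  intro t ht
  classical
  obtain ⟨r, rfl⟩ : ∃ r : ℕ, t = r + 1 := ⟨t - 1, (Nat.succ_pred_eq_of_pos ht).symm⟩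
  -- real constants
  have hD3 : (3:ℝ) ≤ (d:ℝ) := by exact_mod_cast hd
  have hD1 : (0:ℝ) < (d:ℝ) - 1 := by linarith
  have hdC : ((d:ℂ) - 1) ≠ 0 := GOD.hdC' d hd
  have hsqnn := Real.sqrt_nonneg ((d:ℝ)-1)
  have hsq : Real.sqrt ((d:ℝ)-1) ^ 2 = (d:ℝ) - 1 := Real.sq_sqrt (by linarith)
  have hs1 : 1 < Real.sqrt ((d:ℝ)-1) := by nlinarith
  have hβ2 : β < (d:ℝ) - 2 := by nlinarith
  have hspos : (1:ℝ) < (d:ℝ) - 1 - β := by nlinarith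
  set ρ : ℝ := ((d:ℝ) - 1 - β)/((d:ℝ)-1) with hρdef
  have hρpos : 0 < ρ := div_pos (by linarith) hD1
  have hsge : Real.sqrt ((d:ℝ)-1) ≤ (d:ℝ) - 1 - β := by linarith
  have hρsq : ((d:ℝ)-1)⁻¹ ≤ ρ^2 := by
    rw [hρdef, div_pow, inv_eq_one_div, div_le_div_iff₀ hD1 (by positivity)]
    have key : (d:ℝ) - 1 ≤ ((d:ℝ)-1-β)^2 := by nlinarith
    nlinarith [mul_le_mul_of_nonneg_right key hD1.le]
  have hρinv : ((d:ℝ)-1)⁻¹ ≤ ρ := by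
    rw [hρdef, inv_eq_one_div, div_le_div_iff₀ hD1 hD1]
    nlinarith
  set Cp : ℝ := 1 + ρ⁻¹ with hCpdef
  have hCp1 : (1:ℝ) ≤ Cp := by
    have : 0 < ρ⁻¹ := by positivity
    rw [hCpdef]; linarith
  have hCple : Cp ≤ 5 * ((d:ℝ)-1) / (2 * ((d:ℝ)-2-β)) := by
    rw [hCpdef, hρdef, inv_div]
    have h1 : 1 + ((d:ℝ)-1)/((d:ℝ)-1-β) = (((d:ℝ)-1-β) + ((d:ℝ)-1))/((d:ℝ)-1-β) := by
      field_simp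
    rw [h1, div_le_div_iff₀ (by linarith) (by linarith : (0:ℝ) < 2*((d:ℝ)-2-β))]
    nlinarith [hβ, hD1, hspos]
  -- spectral setup
  have hA : (adjC G).IsHermitian := by
    unfold Matrix.IsHermitian
    ext v w
    simp only [Matrix.conjTranspose_apply, adjC]
    by_cases h : G.Adj w v
    · rw [if_pos h, if_pos (h.symm)]; simp
    · rw [if_neg h, if_neg (fun hh => h (hh.symm))]; simp
  set bas := hA.eigenvectorBasis with hbasdef
  set x : V → V → ℂ := fun i => (WithLp.equiv 2 (V → ℂ)) (bas i) with hxdef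
  set μ : V → ℝ := hA.eigenvalues with hμdef
  have heig : ∀ i, (adjC G).mulVec (x i) = ((μ i : ℝ):ℂ) • x i := by
    intro i
    have h := hA.mulVec_eigenvectorBasis i
    rw [hxdef, hμdef]
    simp only
    rw [show (WithLp.equiv 2 (V → ℂ)) (bas i) = (hA.eigenvectorBasis i).ofLp from rfl, h]
    funext v
    simp [Complex.real_smul]
  have heigS : ∀ i v, GOD.Sv G v (fun b => x i b.snd) = ((μ i:ℝ):ℂ) * x i v := by
    intro i v
    rw [GOD.Sv_hd, heig i]
    simp
  have horth : ∀ i j, (∑ v, (starRingEnd ℂ) (x i v) * x j v) = if i = j then (1:ℂ) else 0 := by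
    intro i j
    have h := orthonormal_iff_ite.mp bas.orthonormal i j
    calc ∑ v, (starRingEnd ℂ) (x i v) * x j v
        = (inner ℂ (bas i) (bas j) : ℂ) := by rw [PiLp.inner_apply]; simp only [RCLike.inner_apply']; rfl
      _ = _ := h
  have hxne : ∀ i, x i ≠ 0 := by
    intro i h0
    have h := horth i i
    rw [if_pos rfl, h0] at h
    simp at h
  have habs : ∀ i, (∑ v, x i v) = 0 → |μ i| ≤ (d:ℝ) - β := by
    intro i hs
    have h := hspec ((μ i:ℝ):ℂ) (x i) (hxne i) (heig i) hs
    rwa [Complex.norm_real, Real.norm_eq_abs] at h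
  have hsum_ne : ∀ i, (∑ v, x i v) ≠ 0 → μ i = (d:ℝ) := by
    intro i hs
    have h1 : (d:ℂ) * ∑ v, x i v = ((μ i:ℝ):ℂ) * ∑ v, x i v := by
      rw [← GOD.sum_mulVec_adjC d hreg (x i), heig i]
      rw [Finset.mul_sum]
      exact Finset.sum_congr rfl (fun v _ => by simp)
    have h2 : (d:ℂ) = ((μ i:ℝ):ℂ) := mul_right_cancel₀ hs h1
    exact_mod_cast h2.symm
  have hdnn : (0:ℝ) ≤ (d:ℝ) := by positivity
  have huniq : ∀ i j, μ i = (d:ℝ) → μ j = (d:ℝ) → i = j := by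
    intro i j hi hj
    by_contra hij
    have hσ : ∀ k, μ k = (d:ℝ) → (∑ v, x k v) ≠ 0 := by
      intro k hk h0
      have h := habs k h0
      rw [hk, abs_of_nonneg hdnn] at h
      linarith
    have hσi := hσ i hi
    have hσj := hσ j hj
    set y : V → ℂ := fun v => (∑ w, x j w) * x i v - (∑ w, x i w) * x j v with hydef
    have hysum : (∑ v, y v) = 0 := by
      simp only [hydef]
      rw [Finset.sum_sub_distrib, ← Finset.mul_sum, ← Finset.mul_sum]
      ring
    have hyvec : y = (∑ w, x j w) • x i - (∑ w, x i w) • x j := rfl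
    have hyeig : (adjC G).mulVec y = ((μ i:ℝ):ℂ) • y := by
      rw [hyvec, Matrix.mulVec_sub, Matrix.mulVec_smul, Matrix.mulVec_smul, heig i, heig j]
      have hμji : ((μ j:ℝ):ℂ) = ((μ i:ℝ):ℂ) := by rw [hi, hj]
      rw [hμji]
      funext v
      simp only [Pi.sub_apply, Pi.smul_apply, smul_eq_mul]
      ring
    have hyne : y ≠ 0 := by
      intro h0
      apply hσj
      have hcomp : (∑ v, (starRingEnd ℂ) (x i v) * y v) = ∑ w, x j w := by
        simp only [hydef]
        have he : ∀ v, (starRingEnd ℂ) (x i v) * ((∑ w, x j w) * x i v - (∑ w, x i w) * x j v)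
            = (∑ w, x j w) * ((starRingEnd ℂ) (x i v) * x i v)
              - (∑ w, x i w) * ((starRingEnd ℂ) (x i v) * x j v) := by intro v; ring
        rw [Finset.sum_congr rfl (fun v _ => he v), Finset.sum_sub_distrib, ← Finset.mul_sum,
          ← Finset.mul_sum, horth i i, horth i j, if_pos rfl, if_neg hij]
        ring
      rw [h0] at hcomp
      simp at hcomp
      exact hcomp.symm
    have h := hspec ((μ i:ℝ):ℂ) y hyne hyeig hysum
    rw [Complex.norm_real, Real.norm_eq_abs, hi, abs_of_nonneg hdnn] at h
    linarith
  have hzero : ∀ i, μ i = (d:ℝ) → (∑ b : G.Dart, (starRingEnd ℂ) (x i b.fst) * f b) = 0 ∧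
      (∑ b : G.Dart, (starRingEnd ℂ) (x i b.snd) * f b) = 0 := by
    intro i hi
    have hones : ∀ v : V, (1:ℂ) = (starRingEnd ℂ) (∑ w, x i w) * x i v := by
      have hrep := bas.sum_repr' ((WithLp.equiv 2 (V → ℂ)).symm (fun _ => (1:ℂ)))
      have hco : ∀ j, (inner ℂ (bas j) ((WithLp.equiv 2 (V → ℂ)).symm (fun _ => (1:ℂ))) : ℂ)
          = (starRingEnd ℂ) (∑ w, x j w) := by
        intro j
        rw [PiLp.inner_apply, map_sum]
        exact Finset.sum_congr rfl (fun w _ => by simp; rfl)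
      have hred : (∑ j, (inner ℂ (bas j) ((WithLp.equiv 2 (V → ℂ)).symm (fun _ => (1:ℂ))) : ℂ) • bas j)
          = ((starRingEnd ℂ) (∑ w, x i w)) • bas i := by
        rw [Finset.sum_congr rfl (fun j _ => by rw [hco j])]
        refine Finset.sum_eq_single i ?_ ?_
        · intro j _ hji
          have hj0 : (∑ w, x j w) = 0 := by
            by_contra h0
            exact hji (huniq j i (hsum_ne j h0) hi)
          rw [hj0, map_zero, zero_smul]
        · intro hni; exact absurd (Finset.mem_univ i) hni
      intro v
      have hev := congrArg (fun z => (WithLp.equiv 2 (V → ℂ)) z v) (hred.symm.trans hrep)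
      exact hev.symm
    have hσne : (starRingEnd ℂ) (∑ w, x i w) ≠ 0 := by
      intro h0
      have h1 := hones i
      rw [h0, zero_mul] at h1
      exact one_ne_zero h1
    have hxc : ∀ v, x i v = ((starRingEnd ℂ) (∑ w, x i w))⁻¹ :=
      fun v => eq_inv_of_mul_eq_one_right (hones v).symm
    constructor
    · calc ∑ b : G.Dart, (starRingEnd ℂ) (x i b.fst) * f b
          = ∑ b : G.Dart, (starRingEnd ℂ) (((starRingEnd ℂ) (∑ w, x i w))⁻¹) * f b := by
            exact Finset.sum_congr rfl (fun b _ => by rw [hxc b.fst])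
        _ = (starRingEnd ℂ) (((starRingEnd ℂ) (∑ w, x i w))⁻¹) * ∑ b : G.Dart, f b := by
            rw [Finset.mul_sum]
        _ = 0 := by rw [hf, mul_zero]
    · calc ∑ b : G.Dart, (starRingEnd ℂ) (x i b.snd) * f b
          = ∑ b : G.Dart, (starRingEnd ℂ) (((starRingEnd ℂ) (∑ w, x i w))⁻¹) * f b := by
            exact Finset.sum_congr rfl (fun b _ => by rw [hxc b.snd])
        _ = (starRingEnd ℂ) (((starRingEnd ℂ) (∑ w, x i w))⁻¹) * ∑ b : G.Dart, f b := by
            rw [Finset.mul_sum]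
        _ = 0 := by rw [hf, mul_zero]
  -- coefficients and blocks
  set αc : V → ℂ := fun i => ∑ b : G.Dart, (starRingEnd ℂ) (x i b.fst) * f b with hαdef
  set βv : V → ℂ := fun i => ∑ b : G.Dart, (starRingEnd ℂ) (x i b.snd) * f b with hβvdef
  set den : V → ℂ := fun i => (d:ℂ)^2 - ((μ i:ℝ):ℂ)^2 with hdendef
  set cc : V → ℂ := fun i => ((d:ℂ) * αc i - ((μ i:ℝ):ℂ) * βv i)/(den i) with hccdef
  set ee : V → ℂ := fun i => ((d:ℂ) * βv i - ((μ i:ℝ):ℂ) * αc i)/(den i) with heedef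
  set fb : V → G.Dart → ℂ := fun i b => cc i * x i b.fst + ee i * x i b.snd with hfbdef
  set g : G.Dart → ℂ := fun b => f b - ∑ i, fb i b with hgdef
  have habsd : ∀ i, μ i ≠ (d:ℝ) → |μ i| ≤ (d:ℝ) - β := by
    intro i hne
    by_cases h0 : (∑ v, x i v) = 0
    · exact habs i h0
    · exact absurd (hsum_ne i h0) hne
  have hden : ∀ i, μ i ≠ (d:ℝ) → den i ≠ 0 := by
    intro i hne
    have hb := habsd i hne
    simp only [hdendef]
    intro h0
    have h2 : ((d:ℝ))^2 - (μ i)^2 = 0 := by exact_mod_cast h0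
    nlinarith [sq_abs (μ i), abs_nonneg (μ i)]
  have hccee0 : ∀ i, μ i = (d:ℝ) → cc i = 0 ∧ ee i = 0 := by
    intro i hi
    have hden0 : den i = 0 := by
      simp only [hdendef, hi]
      push_cast
      ring
    constructor
    · simp only [hccdef, hden0, div_zero]
    · simp only [heedef, hden0, div_zero]
  have hidentA : ∀ i, (d:ℂ) * cc i + ((μ i:ℝ):ℂ) * ee i = αc i := by
    intro i
    by_cases hi : μ i = (d:ℝ)
    · obtain ⟨hc0, he0⟩ := hccee0 i hi
      rw [hc0, he0, mul_zero, mul_zero, add_zero]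
      exact ((hzero i hi).1).symm
    · have hD := hden i hi
      have hD' : (d:ℂ)^2 - ((μ i:ℝ):ℂ)^2 ≠ 0 := by
        simpa [hdendef] using hD
      simp only [hccdef, heedef, hdendef]
      field_simp
      ring
  have hidentB : ∀ i, ((μ i:ℝ):ℂ) * cc i + (d:ℂ) * ee i = βv i := by
    intro i
    by_cases hi : μ i = (d:ℝ)
    · obtain ⟨hc0, he0⟩ := hccee0 i hi
      rw [hc0, he0, mul_zero, mul_zero, add_zero]
      exact ((hzero i hi).2).symm
    · have hD := hden i hi
      have hD' : (d:ℂ)^2 - ((μ i:ℝ):ℂ)^2 ≠ 0 := by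
        simpa [hdendef] using hD
      simp only [hccdef, heedef, hdendef]
      field_simp
      ring
  -- expansion of boundary sums of f in the eigenbasis
  have hSf : ∀ v, GOD.Sv G v f = ∑ i, αc i * x i v := by
    intro v
    have hrep := bas.sum_repr' ((WithLp.equiv 2 (V → ℂ)).symm (fun w => GOD.Sv G w f))
    have hco : ∀ j, (inner ℂ (bas j) ((WithLp.equiv 2 (V → ℂ)).symm (fun w => GOD.Sv G w f)) : ℂ)
        = αc j := by
      intro j
      calc (inner ℂ (bas j) ((WithLp.equiv 2 (V → ℂ)).symm (fun w => GOD.Sv G w f)) : ℂ)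
          = ∑ w, (starRingEnd ℂ) (x j w) * GOD.Sv G w f := by rw [PiLp.inner_apply]; simp only [RCLike.inner_apply']; rfl
        _ = ∑ b : G.Dart, (starRingEnd ℂ) (x j b.fst) * f b :=
            (GOD.sum_tl_mul (fun v => (starRingEnd ℂ) (x j v)) f).symm
        _ = αc j := rfl
    have hred : (∑ j, αc j • bas j) = (WithLp.equiv 2 (V → ℂ)).symm (fun w => GOD.Sv G w f) := by
      rw [← hrep]
      exact Finset.sum_congr rfl (fun j _ => by rw [hco j])
    have hev := congrArg (fun z => (WithLp.equiv 2 (V → ℂ)) z v) hred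
    simp only at hev
    rw [GOD.equiv_sum_apply] at hev
    exact hev.symm.trans (Finset.sum_congr rfl (fun j _ => rfl))
  have hTf : ∀ v, GOD.Tv G v f = ∑ i, βv i * x i v := by
    intro v
    have hrep := bas.sum_repr' ((WithLp.equiv 2 (V → ℂ)).symm (fun w => GOD.Tv G w f))
    have hco : ∀ j, (inner ℂ (bas j) ((WithLp.equiv 2 (V → ℂ)).symm (fun w => GOD.Tv G w f)) : ℂ)
        = βv j := by
      intro j
      calc (inner ℂ (bas j) ((WithLp.equiv 2 (V → ℂ)).symm (fun w => GOD.Tv G w f)) : ℂ)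
          = ∑ w, (starRingEnd ℂ) (x j w) * GOD.Tv G w f := by rw [PiLp.inner_apply]; simp only [RCLike.inner_apply']; rfl
        _ = ∑ b : G.Dart, (starRingEnd ℂ) (x j b.snd) * f b :=
            (GOD.sum_hd_mul (fun v => (starRingEnd ℂ) (x j v)) f).symm
        _ = βv j := rfl
    have hred : (∑ j, βv j • bas j) = (WithLp.equiv 2 (V → ℂ)).symm (fun w => GOD.Tv G w f) := by
      rw [← hrep]
      exact Finset.sum_congr rfl (fun j _ => by rw [hco j])
    have hev := congrArg (fun z => (WithLp.equiv 2 (V → ℂ)) z v) hred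
    simp only at hev
    rw [GOD.equiv_sum_apply] at hev
    exact hev.symm.trans (Finset.sum_congr rfl (fun j _ => rfl))
  -- boundary sums of blocks
  have hSfb : ∀ i v, GOD.Sv G v (fb i) = αc i * x i v := by
    intro i v
    have h1 : GOD.Sv G v (fb i)
        = cc i * ((d:ℂ) * x i v) + ee i * (((μ i:ℝ):ℂ) * x i v) := by
      simp only [hfbdef]
      rw [GOD.Sv_add, GOD.Sv_cmul, GOD.Sv_cmul, GOD.Sv_tl d hreg, heigS i]
    rw [h1, ← hidentA i]
    ring
  have hTfb : ∀ i v, GOD.Tv G v (fb i) = βv i * x i v := by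
    intro i v
    have h1 : GOD.Tv G v (fb i)
        = cc i * (((μ i:ℝ):ℂ) * x i v) + ee i * ((d:ℂ) * x i v) := by
      simp only [hfbdef]
      rw [GOD.Tv_add, GOD.Tv_cmul, GOD.Tv_cmul, GOD.Tv_tl d hreg, heigS i, GOD.Tv_hd d hreg]
    rw [h1, ← hidentB i]
    ring
  have hSg : ∀ v, GOD.Sv G v g = 0 := by
    intro v
    have h1 : GOD.Sv G v g = GOD.Sv G v f - ∑ i, GOD.Sv G v (fb i) := by
      simp only [hgdef]
      rw [GOD.Sv_sub, GOD.Sv_sum]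
    rw [h1, hSf v, Finset.sum_congr rfl (fun i _ => hSfb i v), sub_self]
  have hTg : ∀ v, GOD.Tv G v g = 0 := by
    intro v
    have h1 : GOD.Tv G v g = GOD.Tv G v f - ∑ i, GOD.Tv G v (fb i) := by
      simp only [hgdef]
      rw [GOD.Tv_sub, GOD.Tv_sum]
    rw [h1, hTf v, Finset.sum_congr rfl (fun i _ => hTfb i v), sub_self]
  -- block shape of powers
  have hform : ∀ (i : V) (s : ℕ), ∃ a b : ℂ,
      ((transM G d)^s).mulVec (fb i) = fun dart => a * x i dart.fst + b * x i dart.snd := by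
    intro i s
    induction s with
    | zero =>
      refine ⟨cc i, ee i, ?_⟩
      rw [pow_zero, Matrix.one_mulVec]
    | succ n ih =>
      obtain ⟨a, b, hab⟩ := ih
      refine ⟨-(b * ((d:ℂ)-1)⁻¹), a + b * ((μ i:ℝ):ℂ) * ((d:ℂ)-1)⁻¹, ?_⟩
      have hstep : ((transM G d)^(n+1)).mulVec (fb i)
          = (transM G d).mulVec (((transM G d)^n).mulVec (fb i)) := by
        rw [Matrix.mulVec_mulVec, ← pow_succ']
      rw [hstep, hab, GOD.Mblock d hd hreg (x i) _ (heigS i)]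
  have henfb0 : ∀ i, (0:ℝ) ≤ GOD.en (fb i) := fun i => GOD.en_nonneg _
  -- per-block norm bound
  have hblockbound : ∀ i, GOD.en (((transM G d)^(r+1)).mulVec (fb i))
      ≤ Cp * ((r:ℝ)+1) * ρ^(r+1) * GOD.en (fb i) := by
    intro i
    by_cases hμi : μ i = (d:ℝ)
    · obtain ⟨hc0, he0⟩ := hccee0 i hμi
      have hfb0 : fb i = (fun _ : G.Dart => (0:ℂ)) := by
        funext b
        simp only [hfbdef, hc0, he0]
        ring
      rw [hfb0]
      have hz : ((transM G d)^(r+1)).mulVec (fun _ : G.Dart => (0:ℂ)) = fun _ : G.Dart => (0:ℂ) := by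
        rw [show (fun _ : G.Dart => (0:ℂ)) = (0 : G.Dart → ℂ) from rfl, Matrix.mulVec_zero]
      rw [hz]
      have hen0 : GOD.en (fun _ : G.Dart => (0:ℂ)) = 0 := by
        rw [GOD.en_eq_sqrt_nsq]
        simp
      rw [hen0, mul_zero]
    · have hμb := habsd i hμi
      obtain ⟨l₁, l₂, hl1, hl2, hal1, hal2⟩ := GOD.exists_lam (d:ℝ) β (μ i) hD3 hβ hβ' hμb
      have hcast : (((d:ℝ)):ℂ) = (d:ℂ) := by push_cast; rfl
      have hl1' : l₁ + l₂ = ((μ i:ℝ):ℂ) * ((d:ℂ)-1)⁻¹ := by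
        rw [hl1, ← hcast, div_eq_mul_inv]
      have hl2' : l₁ * l₂ = ((d:ℂ)-1)⁻¹ := by
        rw [hl2, ← hcast]
      have hM2 : (transM G d).mulVec ((transM G d).mulVec (fb i))
          = (((μ i:ℝ):ℂ) * ((d:ℂ)-1)⁻¹) • (transM G d).mulVec (fb i) - (((d:ℂ)-1)⁻¹) • fb i := by
        have hmb := GOD.M2block d hd hreg (x i) ((μ i:ℝ):ℂ) (heigS i) (cc i) (ee i)
        simp only [hfbdef]
        exact hmb
      have hpowf := GOD.pow_formula (transM G d) (fb i)
        (((μ i:ℝ):ℂ) * ((d:ℂ)-1)⁻¹) (((d:ℂ)-1)⁻¹) hM2 r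
      set S1 := sseq (((μ i:ℝ):ℂ) * ((d:ℂ)-1)⁻¹) (((d:ℂ)-1)⁻¹) (r+1) with hS1def
      set S0 := sseq (((μ i:ℝ):ℂ) * ((d:ℂ)-1)⁻¹) (((d:ℂ)-1)⁻¹) r with hS0def
      have habsB : ‖((d:ℂ)-1)⁻¹‖ = ((d:ℝ)-1)⁻¹ := by
        rw [norm_inv]
        congr 1
        rw [show ((d:ℂ)-1) = ((((d:ℝ)-1 : ℝ)):ℂ) by push_cast; ring, Complex.norm_real, Real.norm_eq_abs,
          abs_of_pos hD1]
      have h1 : GOD.en (((transM G d)^(r+1)).mulVec (fb i))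
          ≤ ‖S1‖ * GOD.en ((transM G d).mulVec (fb i))
            + ((d:ℝ)-1)⁻¹ * ‖S0‖ * GOD.en (fb i) := by
        rw [hpowf]
        have hfe : (S1 • (transM G d).mulVec (fb i) - (((d:ℂ)-1)⁻¹ * S0) • fb i)
            = fun b => S1 * ((transM G d).mulVec (fb i) b) + (-(((d:ℂ)-1)⁻¹ * S0)) * (fb i b) := by
          funext b
          simp only [Pi.sub_apply, Pi.smul_apply, smul_eq_mul]
          ring
        rw [hfe]
        calc GOD.en (fun b => S1 * ((transM G d).mulVec (fb i) b) + (-(((d:ℂ)-1)⁻¹ * S0)) * (fb i b))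
            ≤ GOD.en (fun b => S1 * ((transM G d).mulVec (fb i) b))
              + GOD.en (fun b => (-(((d:ℂ)-1)⁻¹ * S0)) * (fb i b)) := GOD.en_add_le _ _
          _ = ‖S1‖ * GOD.en ((transM G d).mulVec (fb i))
              + ‖-(((d:ℂ)-1)⁻¹ * S0)‖ * GOD.en (fb i) := by
              rw [GOD.en_smul, GOD.en_smul]
          _ = ‖S1‖ * GOD.en ((transM G d).mulVec (fb i))
              + ((d:ℝ)-1)⁻¹ * ‖S0‖ * GOD.en (fb i) := by
              rw [norm_neg, norm_mul, habsB]
      have hcontr : GOD.en ((transM G d).mulVec (fb i)) ≤ GOD.en (fb i) :=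
        GOD.en_contraction d hd hreg (fb i)
      have hs1b := GOD.sseq_abs_bound _ _ l₁ l₂ ρ hρpos hl1' hl2' hal1 hal2 (r+1)
      have hs0b := GOD.sseq_abs_bound _ _ l₁ l₂ ρ hρpos hl1' hl2' hal1 hal2 r
      rw [← hS1def] at hs1b
      rw [← hS0def] at hs0b
      have hS1le : ‖S1‖ ≤ ((r:ℝ)+1) * ρ^(r+1) * ρ⁻¹ := by
        rw [← mul_le_mul_iff_of_pos_right hρpos]
        calc ‖S1‖ * ρ ≤ ((r+1:ℕ):ℝ) * ρ^(r+1) := hs1b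
          _ = ((r:ℝ)+1) * ρ^(r+1) * ρ⁻¹ * ρ := by
              push_cast
              field_simp
      have hS0le : ‖S0‖ ≤ (r:ℝ) * ρ^r * ρ⁻¹ := by
        rw [← mul_le_mul_iff_of_pos_right hρpos]
        calc ‖S0‖ * ρ ≤ (r:ℝ) * ρ^r := hs0b
          _ = (r:ℝ) * ρ^r * ρ⁻¹ * ρ := by field_simp
      have habs0 : (0:ℝ) ≤ ‖S0‖ := norm_nonneg _
      have habs1 : (0:ℝ) ≤ ‖S1‖ := norm_nonneg _
      have henM : (0:ℝ) ≤ GOD.en ((transM G d).mulVec (fb i)) := GOD.en_nonneg _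
      calc GOD.en (((transM G d)^(r+1)).mulVec (fb i))
          ≤ ‖S1‖ * GOD.en ((transM G d).mulVec (fb i))
            + ((d:ℝ)-1)⁻¹ * ‖S0‖ * GOD.en (fb i) := h1
        _ ≤ ‖S1‖ * GOD.en (fb i) + ((d:ℝ)-1)⁻¹ * ‖S0‖ * GOD.en (fb i) := by
            have := mul_le_mul_of_nonneg_left hcontr habs1
            nlinarith
        _ ≤ (((r:ℝ)+1) * ρ^(r+1) * ρ⁻¹) * GOD.en (fb i)
            + (ρ^2 * ((r:ℝ) * ρ^r * ρ⁻¹)) * GOD.en (fb i) := by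
            have e1 : ‖S1‖ * GOD.en (fb i) ≤ (((r:ℝ)+1) * ρ^(r+1) * ρ⁻¹) * GOD.en (fb i) :=
              mul_le_mul_of_nonneg_right hS1le (henfb0 i)
            have e2 : ((d:ℝ)-1)⁻¹ * ‖S0‖ ≤ ρ^2 * ((r:ℝ) * ρ^r * ρ⁻¹) := by
              apply mul_le_mul hρsq hS0le habs0 (by positivity)
            have e3 := mul_le_mul_of_nonneg_right e2 (henfb0 i)
            linarith
        _ ≤ Cp * ((r:ℝ)+1) * ρ^(r+1) * GOD.en (fb i) := by
            have hrr : ρ^2 * ((r:ℝ) * ρ^r * ρ⁻¹) = (r:ℝ) * ρ^(r+1) := by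
              field_simp
              ring
            rw [hrr]
            have hkey : ((r:ℝ)+1) * ρ^(r+1) * ρ⁻¹ + (r:ℝ) * ρ^(r+1) ≤ Cp * ((r:ℝ)+1) * ρ^(r+1) := by
              rw [hCpdef]
              have hrle : (r:ℝ) * ρ^(r+1) ≤ ((r:ℝ)+1) * ρ^(r+1) := by
                apply mul_le_mul_of_nonneg_right (by linarith) (by positivity)
              nlinarith [pow_pos hρpos (r+1)]
            have := mul_le_mul_of_nonneg_right hkey (henfb0 i)
            nlinarith
  -- the null part bound
  obtain ⟨hh, hhS, hhT, hhen, hheq⟩ := GOD.Npow d hd hreg g hSg hTg (r+1)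
  have hgbound : GOD.en (((transM G d)^(r+1)).mulVec g) ≤ Cp * ((r:ℝ)+1) * ρ^(r+1) * GOD.en g := by
    rw [hheq, GOD.en_smul, hhen]
    have habsZ : ‖(-(((d:ℂ)-1)⁻¹))^(r+1)‖ = (((d:ℝ)-1)⁻¹)^(r+1) := by
      rw [norm_pow, norm_neg, norm_inv]
      congr 2
      rw [show ((d:ℂ)-1) = ((((d:ℝ)-1 : ℝ)):ℂ) by push_cast; ring, Complex.norm_real, Real.norm_eq_abs,
        abs_of_pos hD1]
    rw [habsZ]
    have h1 : (((d:ℝ)-1)⁻¹)^(r+1) ≤ ρ^(r+1) := pow_le_pow_left₀ (by positivity) hρinv _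
    have hr1 : (1:ℝ) ≤ (r:ℝ)+1 := by
      have : (0:ℝ) ≤ (r:ℝ) := Nat.cast_nonneg r
      linarith
    have hone : (1:ℝ) ≤ Cp * ((r:ℝ)+1) := by nlinarith [hCp1, hr1]
    have h2 : ρ^(r+1) ≤ Cp * ((r:ℝ)+1) * ρ^(r+1) := by
      calc ρ^(r+1) = 1 * ρ^(r+1) := (one_mul _).symm
        _ ≤ (Cp * ((r:ℝ)+1)) * ρ^(r+1) := mul_le_mul_of_nonneg_right hone (by positivity)
        _ = Cp * ((r:ℝ)+1) * ρ^(r+1) := by ring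
    have heng : (0:ℝ) ≤ GOD.en g := GOD.en_nonneg _
    exact mul_le_mul_of_nonneg_right (h1.trans h2) heng
  -- Pythagoras
  have hpy : ∀ (h0 : G.Dart → ℂ), (∀ v, GOD.Sv G v h0 = 0) → (∀ v, GOD.Tv G v h0 = 0) →
      ∀ (a b : V → ℂ),
      GOD.en (fun dart : G.Dart => h0 dart + ∑ i, (a i * x i dart.fst + b i * x i dart.snd))^2
        = GOD.en h0^2 + ∑ i, GOD.en (fun dart : G.Dart => a i * x i dart.fst + b i * x i dart.snd)^2 := by
    intro h0 hS0 hT0 a b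
    have horthblock : ∀ i j : V, i ≠ j →
        GOD.ipd (fun dart : G.Dart => a i * x i dart.fst + b i * x i dart.snd)
          (fun dart : G.Dart => a j * x j dart.fst + b j * x j dart.snd) = 0 := by
      intro i j hij
      apply GOD.ipd_blocks d hd hreg (x i) (x j) _ (heigS j)
      rw [horth i j, if_neg hij]
    have h1 : GOD.ipd h0 (fun dart : G.Dart => ∑ i, (a i * x i dart.fst + b i * x i dart.snd)) = 0 := by
      rw [GOD.ipd_sum_right]
      refine Finset.sum_eq_zero (fun i _ => ?_)
      rw [GOD.ipd_conj, GOD.ipd_block_null (x i) h0 hS0 hT0 (a i) (b i), map_zero]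
    rw [GOD.pyth h0 _ h1]
    congr 1
    exact GOD.pyth_family univ (fun i => fun dart : G.Dart => a i * x i dart.fst + b i * x i dart.snd)
      (fun i _ j _ hij => horthblock i j hij)
  -- decomposition of f and of the evolved vector
  have hfg : (f : G.Dart → ℂ) = g + ∑ i, fb i := by
    funext b
    rw [Pi.add_apply, Finset.sum_apply]
    simp only [hgdef]
    ring
  have hmulVecSum : ((transM G d)^(r+1)).mulVec (∑ i : V, fb i)
      = ∑ i : V, ((transM G d)^(r+1)).mulVec (fb i) := by
    have hmap := map_sum (Matrix.mulVecLin ((transM G d)^(r+1))) fb Finset.univ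
    simp only [Matrix.mulVecLin_apply] at hmap
    exact hmap
  have hMt : ((transM G d)^(r+1)).mulVec f
      = fun b => ((transM G d)^(r+1)).mulVec g b + ∑ i, ((transM G d)^(r+1)).mulVec (fb i) b := by
    rw [show ((transM G d)^(r+1)).mulVec f = ((transM G d)^(r+1)).mulVec (g + ∑ i, fb i) from by rw [← hfg]]
    rw [Matrix.mulVec_add, hmulVecSum]
    funext b
    rw [Pi.add_apply, Finset.sum_apply]
  -- time-0 Pythagoras
  have hsq0 : GOD.en (f : G.Dart → ℂ)^2 = GOD.en g^2 + ∑ i, GOD.en (fb i)^2 := by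
    have hp := hpy g hSg hTg cc ee
    have e1 : (fun dart : G.Dart => g dart + ∑ i, (cc i * x i dart.fst + ee i * x i dart.snd))
        = (f : G.Dart → ℂ) := by
      funext b
      simp only [hgdef, hfbdef]
      ring
    rw [e1] at hp
    rw [hp]
  -- time-(r+1) Pythagoras
  choose aT bT habT using fun i => hform i (r+1)
  have hsqt : GOD.en (((transM G d)^(r+1)).mulVec f)^2
      = GOD.en (((transM G d)^(r+1)).mulVec g)^2
        + ∑ i, GOD.en (((transM G d)^(r+1)).mulVec (fb i))^2 := by
    have hgS : ∀ v, GOD.Sv G v (fun b => ((-(((d:ℂ)-1)⁻¹))^(r+1)) * hh b) = 0 := by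
      intro v; rw [GOD.Sv_cmul, hhS v, mul_zero]
    have hgT : ∀ v, GOD.Tv G v (fun b => ((-(((d:ℂ)-1)⁻¹))^(r+1)) * hh b) = 0 := by
      intro v; rw [GOD.Tv_cmul, hhT v, mul_zero]
    have hp := hpy (fun b => ((-(((d:ℂ)-1)⁻¹))^(r+1)) * hh b) hgS hgT aT bT
    have e1 : (fun b => ((transM G d)^(r+1)).mulVec g b + ∑ i, ((transM G d)^(r+1)).mulVec (fb i) b)
        = fun dart : G.Dart => ((-(((d:ℂ)-1)⁻¹))^(r+1)) * hh dart
            + ∑ i, (aT i * x i dart.fst + bT i * x i dart.snd) := by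
      funext b
      rw [hheq]
      congr 1
      exact Finset.sum_congr rfl (fun i _ => by rw [habT i])
    have e2 : ∀ i, GOD.en (((transM G d)^(r+1)).mulVec (fb i))
        = GOD.en (fun dart : G.Dart => aT i * x i dart.fst + bT i * x i dart.snd) := by
      intro i; rw [habT i]
    have e3 : GOD.en (((transM G d)^(r+1)).mulVec g)
        = GOD.en (fun b => ((-(((d:ℂ)-1)⁻¹))^(r+1)) * hh b) := by rw [hheq]
    rw [hMt, e1, e3]
    rw [show (∑ i, GOD.en (((transM G d)^(r+1)).mulVec (fb i))^2)
        = ∑ i, GOD.en (fun dart : G.Dart => aT i * x i dart.fst + bT i * x i dart.snd)^2 from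
      Finset.sum_congr rfl (fun i _ => by rw [e2 i])]
    exact hp
  -- final squared bound
  have hcn : (0:ℝ) ≤ Cp * ((r:ℝ)+1) * ρ^(r+1) := by positivity
  have hfinal_sq : GOD.en (((transM G d)^(r+1)).mulVec f)^2
      ≤ (Cp * ((r:ℝ)+1) * ρ^(r+1) * GOD.en (f : G.Dart → ℂ))^2 := by
    rw [hsqt]
    have h1 : GOD.en (((transM G d)^(r+1)).mulVec g)^2
        ≤ (Cp * ((r:ℝ)+1) * ρ^(r+1))^2 * GOD.en g^2 :=
      (pow_le_pow_left₀ (GOD.en_nonneg _) hgbound 2).trans_eq (by ring)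
    have h2 : ∀ i, GOD.en (((transM G d)^(r+1)).mulVec (fb i))^2
        ≤ (Cp * ((r:ℝ)+1) * ρ^(r+1))^2 * GOD.en (fb i)^2 := fun i =>
      (pow_le_pow_left₀ (GOD.en_nonneg _) (hblockbound i) 2).trans_eq (by ring)
    calc GOD.en (((transM G d)^(r+1)).mulVec g)^2
          + ∑ i, GOD.en (((transM G d)^(r+1)).mulVec (fb i))^2
        ≤ (Cp * ((r:ℝ)+1) * ρ^(r+1))^2 * GOD.en g^2
          + ∑ i, (Cp * ((r:ℝ)+1) * ρ^(r+1))^2 * GOD.en (fb i)^2 :=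
          add_le_add h1 (Finset.sum_le_sum (fun i _ => h2 i))
      _ = (Cp * ((r:ℝ)+1) * ρ^(r+1))^2 * (GOD.en g^2 + ∑ i, GOD.en (fb i)^2) := by
          rw [← Finset.mul_sum]
          ring
      _ = (Cp * ((r:ℝ)+1) * ρ^(r+1) * GOD.en (f : G.Dart → ℂ))^2 := by
          rw [← hsq0]
          ring
  have hfinal : GOD.en (((transM G d)^(r+1)).mulVec f)
      ≤ Cp * ((r:ℝ)+1) * ρ^(r+1) * GOD.en (f : G.Dart → ℂ) := by
    have h1 := Real.sqrt_le_sqrt hfinal_sq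
    rwa [Real.sqrt_sq (GOD.en_nonneg _),
      Real.sqrt_sq (mul_nonneg hcn (GOD.en_nonneg _))] at h1
  -- conclude
  have hact : ‖act ((transM G d)^(r+1)) f‖ = GOD.en (((transM G d)^(r+1)).mulVec f) := rfl
  have hnf : ‖f‖ = GOD.en (f : G.Dart → ℂ) := rfl
  rw [hact, hnf]
  have hcoefnn : (0:ℝ) ≤ ((r:ℝ)+1) * ρ^(r+1) * GOD.en (f : G.Dart → ℂ) := by
    have := GOD.en_nonneg (ι := G.Dart) f
    positivity
  calc GOD.en (((transM G d)^(r+1)).mulVec f)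
      ≤ Cp * ((r:ℝ)+1) * ρ^(r+1) * GOD.en (f : G.Dart → ℂ) := hfinal
    _ = Cp * (((r:ℝ)+1) * ρ^(r+1) * GOD.en (f : G.Dart → ℂ)) := by ring
    _ ≤ (5 * ((d:ℝ)-1) / (2*((d:ℝ)-2-β))) * (((r:ℝ)+1) * ρ^(r+1) * GOD.en (f : G.Dart → ℂ)) :=
        mul_le_mul_of_nonneg_right hCple hcoefnn
    _ = 5 * ((d:ℝ)-1) / (2 * ((d:ℝ)-2-β)) * GOD.en (f : G.Dart → ℂ) * ((r+1:ℕ):ℝ) * ρ^(r+1) := by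
        push_cast
        ring
end

section
/- Let N ≥ 1 and T ≥ 1 be integers, let U be an N×N unitary complex matrix, let {u_j}_{j=1}^N be an orthonormal basis of ℂ^N consisting of eigenvectors of U, and let A be any N×N complex matrix. Then (1/N) Σ_{j=1}^{N} |⟨u_j, A u_j⟩|² ≤ (1/N) Σ_{t=−T}^{T} ŵ_T(t) · Tr( A* U^t A U^{−t} ). -/
open scoped BigOperators Matrix

/-- The triangular weight `ŵ_T(t) = (1/T)(1 − |t|/T)` for `|t| < T`, and `0` otherwise. -/
noncomputable def wHatZ (T : ℕ) (t : ℤ) : ℝ :=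
  if |t| < (T : ℤ) then (1 / (T : ℝ)) * (1 - (|t| : ℝ) / (T : ℝ)) else 0

/-- Integer powers of a unitary matrix: `U^t` for `t ≥ 0` and `(U*)^{−t} = (U^{−1})^{−t}`
for `t < 0`. -/
noncomputable def zPow {ι : Type} [Fintype ι] [DecidableEq ι] (U : Matrix ι ι ℂ) (t : ℤ) : Matrix ι ι ℂ :=
  if 0 ≤ t then U ^ t.toNat else Uᴴ ^ (-t).toNat

section acts
variable {ι : Type} [Fintype ι] [DecidableEq ι]

lemma act_eq (A : Matrix ι ι ℂ) (x : EuclideanSpace ℂ ι) :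
    act A x = Matrix.toEuclideanLin A x := rfl

lemma act_mul (A B : Matrix ι ι ℂ) (x : EuclideanSpace ℂ ι) :
    act (A * B) x = act A (act B x) := by
  simp [act, Matrix.mulVec_mulVec]

lemma act_one (x : EuclideanSpace ℂ ι) : act (1 : Matrix ι ι ℂ) x = x := by
  simp [act]

lemma act_smul (A : Matrix ι ι ℂ) (c : ℂ) (x : EuclideanSpace ℂ ι) :
    act A (c • x) = c • act A x := by
  simp [act_eq, map_smul]

lemma act_sum (A : Matrix ι ι ℂ) {κ : Type*} (s : Finset κ) (f : κ → EuclideanSpace ℂ ι) :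
    act A (∑ k ∈ s, f k) = ∑ k ∈ s, act A (f k) := by
  simp [act_eq, map_sum]

lemma inner_act_conjT (A : Matrix ι ι ℂ) (x y : EuclideanSpace ℂ ι) :
    (inner ℂ (act Aᴴ x) y : ℂ) = inner ℂ x (act A y) := by
  rw [act_eq, act_eq, Matrix.toEuclideanLin_conjTranspose_eq_adjoint]
  exact LinearMap.adjoint_inner_left _ _ _

lemma inner_act_conjT' (A : Matrix ι ι ℂ) (x y : EuclideanSpace ℂ ι) :
    (inner ℂ x (act Aᴴ y) : ℂ) = inner ℂ (act A x) y := by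
  rw [← inner_conj_symm, inner_act_conjT, inner_conj_symm]

lemma trace_eq_sum_inner (M : Matrix ι ι ℂ) (b : OrthonormalBasis ι ℂ (EuclideanSpace ℂ ι)) :
    Matrix.trace M = ∑ i, (inner ℂ (b i) (act M (b i)) : ℂ) := by
  have h1 : Matrix.trace M = LinearMap.trace ℂ _ (Matrix.toEuclideanLin M) := by
    rw [Matrix.toEuclideanLin_eq_toLin, LinearMap.trace_eq_matrix_trace ℂ (PiLp.basisFun 2 ℂ ι),
      LinearMap.toMatrix_toLin]
  rw [h1, LinearMap.trace_eq_matrix_trace ℂ b.toBasis]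
  unfold Matrix.trace Matrix.diag
  congr 1; ext i
  rw [LinearMap.toMatrix_apply, OrthonormalBasis.coe_toBasis, OrthonormalBasis.coe_toBasis_repr_apply,
    b.repr_apply_apply, act_eq]

lemma act_pow_eig (U : Matrix ι ι ℂ) (x : EuclideanSpace ℂ ι) (μ : ℂ)
    (h : act U x = μ • x) (n : ℕ) : act (U ^ n) x = μ ^ n • x := by
  induction n with
  | zero => simp [act_one]
  | succ n ih =>
      rw [pow_succ, act_mul, h, act_smul, ih, smul_smul, ← pow_succ']

lemma act_conjT_eig (U : Matrix ι ι ℂ) (hU : Uᴴ * U = 1) (x : EuclideanSpace ℂ ι) (μ : ℂ)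
    (hμ : μ ≠ 0) (h : act U x = μ • x) : act Uᴴ x = μ⁻¹ • x := by
  have h1 : act Uᴴ (act U x) = x := by rw [← act_mul, hU, act_one]
  rw [h, act_smul] at h1
  exact ((inv_smul_eq_iff₀ hμ).mpr h1.symm).symm

lemma act_zPow_eig (U : Matrix ι ι ℂ) (hU : Uᴴ * U = 1) (x : EuclideanSpace ℂ ι) (μ : ℂ)
    (hμ : μ ≠ 0) (h : act U x = μ • x) (t : ℤ) : act (zPow U t) x = μ ^ t • x := by
  unfold zPow
  rcases le_or_gt 0 t with h0 | h0
  · rw [if_pos h0, act_pow_eig U x μ h]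
    congr 1
    rw [← zpow_natCast, Int.toNat_of_nonneg h0]
  · rw [if_neg (not_le.mpr h0), act_pow_eig Uᴴ x μ⁻¹ (act_conjT_eig U hU x μ hμ h)]
    congr 1
    rw [← zpow_natCast, Int.toNat_of_nonneg (by omega)]
    simp [inv_zpow, ← zpow_neg]

end acts
lemma card_fiber (T : ℕ) (t : ℤ) (ht : t ∈ Finset.Icc (-(T : ℤ)) (T : ℤ)) :
    ((Finset.range T ×ˢ Finset.range T).filter
      (fun p : ℕ × ℕ => (p.1 : ℤ) - (p.2 : ℤ) = t)).card = T - t.natAbs := by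
  simp only [Finset.mem_Icc] at ht
  have hle : t.natAbs ≤ T := by omega
  rcases le_or_gt 0 t with h0 | h0
  · have hn : (t.natAbs : ℤ) = t := Int.natAbs_of_nonneg h0
    have : ((Finset.range T ×ˢ Finset.range T).filter
        (fun p : ℕ × ℕ => (p.1 : ℤ) - (p.2 : ℤ) = t)) =
        (Finset.range (T - t.natAbs)).image (fun r => (r + t.natAbs, r)) := by
      ext ⟨s, r⟩
      simp only [Finset.mem_filter, Finset.mem_product, Finset.mem_range, Finset.mem_image,
        Prod.mk.injEq]
      constructor
      · rintro ⟨⟨hs, hr⟩, he⟩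
        exact ⟨r, by omega, by omega, rfl⟩
      · rintro ⟨x, hx, rfl, rfl⟩
        refine ⟨⟨by omega, by omega⟩, by omega⟩
    rw [this, Finset.card_image_of_injective _ (fun x y h => by simpa using congrArg Prod.snd h),
      Finset.card_range]
  · have hn : (t.natAbs : ℤ) = -t := by omega
    have : ((Finset.range T ×ˢ Finset.range T).filter
        (fun p : ℕ × ℕ => (p.1 : ℤ) - (p.2 : ℤ) = t)) =
        (Finset.range (T - t.natAbs)).image (fun s => (s, s + t.natAbs)) := by
      ext ⟨s, r⟩
      simp only [Finset.mem_filter, Finset.mem_product, Finset.mem_range, Finset.mem_image,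
        Prod.mk.injEq]
      constructor
      · rintro ⟨⟨hs, hr⟩, he⟩
        exact ⟨s, by omega, rfl, by omega⟩
      · rintro ⟨x, hx, rfl, rfl⟩
        refine ⟨⟨by omega, by omega⟩, by omega⟩
    rw [this, Finset.card_image_of_injective _ (fun x y h => by simpa using congrArg Prod.fst h),
      Finset.card_range]

lemma wHatZ_eq (T : ℕ) (hT : 1 ≤ T) (t : ℤ) (ht : t ∈ Finset.Icc (-(T : ℤ)) (T : ℤ)) :
    wHatZ T t = ((T - t.natAbs : ℕ) : ℝ) / (T : ℝ) ^ 2 := by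
  simp only [Finset.mem_Icc] at ht
  have hle : t.natAbs ≤ T := by omega
  have hT0 : (0 : ℝ) < T := by exact_mod_cast hT
  unfold wHatZ
  have habs : |(t : ℝ)| = (t.natAbs : ℝ) := by
    rw [← Int.cast_abs, Int.abs_eq_natAbs, Int.cast_natCast]
  rcases lt_or_ge |t| (T : ℤ) with h | h
  · rw [if_pos h]
    have hlt : t.natAbs < T := by
      have := (abs_lt.mp h)
      omega
    rw [Nat.cast_sub hle, habs]
    field_simp
  · rw [if_neg (not_lt.mpr h)]
    have : t.natAbs = T := by
      rw [Int.abs_eq_natAbs] at h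
      omega
    simp [this]

lemma fejer (T : ℕ) (hT : 1 ≤ T) (l : ℂ) (hl : ‖l‖ = 1) :
    ∑ t ∈ Finset.Icc (-(T : ℤ)) (T : ℤ), ((wHatZ T t : ℝ) : ℂ) * l ^ t
      = (((1 / (T : ℝ) ^ 2) * ‖∑ s ∈ Finset.range T, l ^ s‖ ^ 2 : ℝ) : ℂ) := by
  set P := ∑ s ∈ Finset.range T, l ^ s with hP
  have hl0 : l ≠ 0 := by intro h; simp [h] at hl
  have hinv : l⁻¹ = starRingEnd ℂ l := Complex.inv_eq_conj hl
  have hconjP : starRingEnd ℂ P = ∑ r ∈ Finset.range T, (l⁻¹) ^ r := by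
    rw [hP, map_sum]
    exact Finset.sum_congr rfl fun r _ => by rw [map_pow, ← hinv]
  have key : P * starRingEnd ℂ P
      = ∑ t ∈ Finset.Icc (-(T : ℤ)) (T : ℤ), ((T - t.natAbs : ℕ) : ℂ) * l ^ t := by
    rw [hconjP, hP, Finset.sum_mul_sum]
    have h1 : ∑ s ∈ Finset.range T, ∑ r ∈ Finset.range T, l ^ s * (l⁻¹) ^ r
        = ∑ p ∈ Finset.range T ×ˢ Finset.range T, l ^ ((p.1 : ℤ) - (p.2 : ℤ)) := by
      rw [Finset.sum_product]
      refine Finset.sum_congr rfl fun s _ => Finset.sum_congr rfl fun r _ => ?_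
      rw [sub_eq_add_neg, zpow_add₀ hl0, zpow_natCast, zpow_neg, zpow_natCast, inv_pow]
    rw [h1, ← Finset.sum_fiberwise_of_maps_to (g := fun p : ℕ × ℕ => (p.1 : ℤ) - (p.2 : ℤ))
      (fun p hp => ?_) (fun p => l ^ ((p.1 : ℤ) - (p.2 : ℤ)))]
    · refine Finset.sum_congr rfl fun t ht => ?_
      rw [Finset.sum_congr rfl (fun p hp => by rw [(Finset.mem_filter.mp hp).2]),
        Finset.sum_const, card_fiber T t ht, nsmul_eq_mul]
    · simp only [Finset.mem_product, Finset.mem_range] at hp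
      simp only [Finset.mem_Icc]
      omega
  have hcast : ∀ t ∈ Finset.Icc (-(T : ℤ)) (T : ℤ),
      ((wHatZ T t : ℝ) : ℂ) * l ^ t
        = (1 / (T : ℂ) ^ 2) * (((T - t.natAbs : ℕ) : ℂ) * l ^ t) := by
    intro t ht
    rw [wHatZ_eq T hT t ht]
    push_cast
    ring
  rw [Finset.sum_congr rfl hcast, ← Finset.mul_sum, ← key, Complex.mul_conj]
  rw [Complex.normSq_eq_norm_sq]
  push_cast
  ring

/-- Lemma A (`lem:A`): for an `N × N` unitary matrix `U`, an orthonormal basis `{u_j}` of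
eigenvectors of `U`, and any `N × N` matrix `A`,
`(1/N) ∑_j |⟨u_j, A u_j⟩|² ≤ (1/N) ∑_{t=−T}^{T} ŵ_T(t) Tr(A* U^t A U^{−t})`. -/
theorem variance_trace_bound {N : ℕ} (hN : 1 ≤ N) (T : ℕ) (hT : 1 ≤ T)
    (U : Matrix (Fin N) (Fin N) ℂ) (hU : U ∈ Matrix.unitaryGroup (Fin N) ℂ)
    (u : Fin N → EuclideanSpace ℂ (Fin N)) (hu : Orthonormal ℂ u)
    (heig : ∀ j : Fin N, ∃ μ : ℂ, act U (u j) = μ • u j)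
    (A : Matrix (Fin N) (Fin N) ℂ) :
    (1 / (N : ℝ)) * ∑ j : Fin N, ‖(inner ℂ (u j) (act A (u j)) : ℂ)‖ ^ 2 ≤
      (1 / (N : ℝ)) * ∑ t ∈ Finset.Icc (-(T : ℤ)) (T : ℤ),
        wHatZ T t * (Matrix.trace (Aᴴ * zPow U t * A * zPow U (-t))).re := by
  classical
  have hT0 : (T : ℝ) ≠ 0 := by positivity
  choose μ hμ using heig
  have hUu : Uᴴ * U = 1 := by
    have := hU.1
    rwa [Matrix.star_eq_conjTranspose] at this
  have horth : ∀ k l, (inner ℂ (u k) (u l) : ℂ) = if k = l then 1 else 0 := fun k l => by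
    rcases eq_or_ne k l with h | h
    · simp [h, inner_self_eq_norm_sq_to_K, hu.1 l]
    · simp [h, hu.2 h]
  have hnorm1 : ∀ j, ‖μ j‖ = 1 := by
    intro j
    have h1 : (inner ℂ (act U (u j)) (act U (u j)) : ℂ) = 1 := by
      rw [← inner_act_conjT' U (u j) (act U (u j)), ← act_mul, hUu, act_one]
      simpa using horth j j
    rw [hμ j, inner_smul_left, inner_smul_right] at h1
    have h2 : (starRingEnd ℂ) (μ j) * μ j = 1 := by
      simpa [horth j j, hu.1 j] using h1
    have h3 : ‖μ j‖ ^ 2 = 1 := by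
      have h4 := congrArg Complex.re h2
      rw [mul_comm, Complex.mul_conj] at h4
      have h5 : Complex.normSq (μ j) = 1 := by simpa using h4
      rw [Complex.sq_norm]
      exact h5
    nlinarith [norm_nonneg (μ j)]
  have hμ0 : ∀ j, μ j ≠ 0 := fun j => by
    intro h
    have := hnorm1 j
    rw [h] at this
    simp at this
  -- orthonormal basis whose vectors are `u`
  have : Nonempty (Fin N) := ⟨⟨0, hN⟩⟩
  have hcard : Fintype.card (Fin N) = Module.finrank ℂ (EuclideanSpace ℂ (Fin N)) := by simp
  set b0 := basisOfOrthonormalOfCardEqFinrank hu hcard with hb0def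
  have hb0 : ⇑b0 = u := coe_basisOfOrthonormalOfCardEqFinrank hu hcard
  set b : OrthonormalBasis (Fin N) ℂ (EuclideanSpace ℂ (Fin N)) :=
    b0.toOrthonormalBasis (by rwa [hb0]) with hbdef
  have hb : ⇑b = u := by rw [hbdef, Module.Basis.coe_toOrthonormalBasis, hb0]
  set a : Fin N → Fin N → ℂ := fun k j => inner ℂ (u k) (act A (u j)) with ha
  have hexp' : ∀ j, act A (u j) = ∑ k, a k j • u k := by
    intro j
    conv_lhs => rw [← b.sum_repr (act A (u j))]
    refine Finset.sum_congr rfl fun k _ => ?_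
    rw [b.repr_apply_apply, hb]
  -- the trace identity
  have htr : ∀ t : ℤ, Matrix.trace (Aᴴ * zPow U t * A * zPow U (-t))
      = ∑ j, ∑ k, ((‖a k j‖ ^ 2 : ℝ) : ℂ) * ((μ k * (μ j)⁻¹) ^ t) := by
    intro t
    rw [trace_eq_sum_inner _ b]
    refine Finset.sum_congr rfl fun j _ => ?_
    rw [hb, act_mul, act_mul, act_mul,
      act_zPow_eig U hUu (u j) (μ j) (hμ0 j) (hμ j) (-t),
      act_smul, act_smul, act_smul, inner_smul_right, inner_act_conjT']
    have h2 : act (zPow U t) (act A (u j)) = ∑ k, (a k j * μ k ^ t) • u k := by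
      rw [hexp' j, act_sum]
      refine Finset.sum_congr rfl fun k _ => ?_
      rw [act_smul, act_zPow_eig U hUu (u k) (μ k) (hμ0 k) (hμ k) t, smul_smul]
    rw [h2, hexp' j]
    have h3 : (inner ℂ (∑ k, a k j • u k) (∑ k, (a k j * μ k ^ t) • u k) : ℂ)
        = ∑ k, ((‖a k j‖ ^ 2 : ℝ) : ℂ) * μ k ^ t := by
      rw [inner_sum]
      refine Finset.sum_congr rfl fun k _ => ?_
      rw [sum_inner]
      simp only [inner_smul_left, inner_smul_right, horth, mul_ite, mul_one, mul_zero,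
        ite_mul, zero_mul]
      rw [Finset.sum_ite_eq' Finset.univ k
        (fun l => a k j * μ k ^ t * (starRingEnd ℂ) (a l j))]
      simp only [Finset.mem_univ, if_true]
      rw [show a k j * μ k ^ t * (starRingEnd ℂ) (a k j)
          = ((a k j) * (starRingEnd ℂ) (a k j)) * μ k ^ t by ring,
        Complex.mul_conj, Complex.normSq_eq_norm_sq]
    rw [h3, Finset.mul_sum]
    refine Finset.sum_congr rfl fun k _ => ?_
    rw [mul_zpow, inv_zpow, ← zpow_neg]
    ring
  -- weights
  set w : Fin N → Fin N → ℝ :=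
    fun j k => (1 / (T : ℝ) ^ 2) * ‖∑ s ∈ Finset.range T, (μ k * (μ j)⁻¹) ^ s‖ ^ 2 with hw
  have hw0 : ∀ j k, 0 ≤ w j k := fun j k => by positivity
  have hwjj : ∀ j, w j j = 1 := by
    intro j
    rw [hw]
    simp only [mul_inv_cancel₀ (hμ0 j), one_pow, Finset.sum_const, Finset.card_range,
      nsmul_eq_mul, mul_one, Complex.norm_natCast]
    field_simp
  have hlam : ∀ j k, ‖μ k * (μ j)⁻¹‖ = 1 := fun j k => by
    rw [norm_mul, norm_inv, hnorm1, hnorm1]; norm_num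
  -- rewrite the RHS sum
  have hRHS : ∑ t ∈ Finset.Icc (-(T : ℤ)) (T : ℤ),
      wHatZ T t * (Matrix.trace (Aᴴ * zPow U t * A * zPow U (-t))).re
      = ∑ j, ∑ k, ‖a k j‖ ^ 2 * w j k := by
    have step1 : ∀ t ∈ Finset.Icc (-(T : ℤ)) (T : ℤ),
        wHatZ T t * (Matrix.trace (Aᴴ * zPow U t * A * zPow U (-t))).re
        = (((wHatZ T t : ℝ) : ℂ) * Matrix.trace (Aᴴ * zPow U t * A * zPow U (-t))).re := by
      intro t _
      rw [Complex.re_ofReal_mul]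
    rw [Finset.sum_congr rfl step1, ← Complex.re_sum]
    have step2 : ∑ t ∈ Finset.Icc (-(T : ℤ)) (T : ℤ),
        ((wHatZ T t : ℝ) : ℂ) * Matrix.trace (Aᴴ * zPow U t * A * zPow U (-t))
        = ((∑ j, ∑ k, ‖a k j‖ ^ 2 * w j k : ℝ) : ℂ) := by
      have inner_eq : ∀ j k, ∑ t ∈ Finset.Icc (-(T : ℤ)) (T : ℤ),
          ((wHatZ T t : ℝ) : ℂ) * (((‖a k j‖ ^ 2 : ℝ) : ℂ) * ((μ k * (μ j)⁻¹) ^ t))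
          = ((‖a k j‖ ^ 2 * w j k : ℝ) : ℂ) := by
        intro j k
        calc ∑ t ∈ Finset.Icc (-(T : ℤ)) (T : ℤ),
            ((wHatZ T t : ℝ) : ℂ) * (((‖a k j‖ ^ 2 : ℝ) : ℂ) * ((μ k * (μ j)⁻¹) ^ t))
            = ((‖a k j‖ ^ 2 : ℝ) : ℂ) * ∑ t ∈ Finset.Icc (-(T : ℤ)) (T : ℤ),
              ((wHatZ T t : ℝ) : ℂ) * ((μ k * (μ j)⁻¹) ^ t) := by
              rw [Finset.mul_sum]
              exact Finset.sum_congr rfl fun t _ => by ring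
          _ = ((‖a k j‖ ^ 2 * w j k : ℝ) : ℂ) := by
              rw [fejer T hT _ (hlam j k)]
              simp only [hw]
              push_cast
              ring
      simp only [htr, Finset.mul_sum]
      rw [Finset.sum_comm]
      refine Eq.trans (Finset.sum_congr rfl fun j _ => Finset.sum_comm) ?_
      rw [Finset.sum_congr rfl fun j _ => Finset.sum_congr rfl fun k _ => inner_eq j k]
      norm_cast
    rw [step2, Complex.ofReal_re]
  rw [hRHS]
  have hdiag : ∀ j, ‖(inner ℂ (u j) (act A (u j)) : ℂ)‖ ^ 2 = ‖a j j‖ ^ 2 := fun j => rfl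
  refine mul_le_mul_of_nonneg_left ?_ (by positivity)
  refine Finset.sum_le_sum fun j _ => ?_
  rw [hdiag j]
  calc ‖a j j‖ ^ 2 = ‖a j j‖ ^ 2 * w j j := by rw [hwjj j]; ring
    _ ≤ ∑ k, ‖a k j‖ ^ 2 * w j k :=
        Finset.single_le_sum (f := fun k => ‖a k j‖ ^ 2 * w j k)
          (fun k _ => by positivity) (Finset.mem_univ j)
end
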